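/- arXiv:1905.11011 — 12 statements merged into one kernel-verified Lean document; each statement's English description precedes it below -/
import Mathlib

section
/- For the heavy-ball method with modal dynamics Â(λ) = [[0,1],[-β, 1+β-αλ]], the modal variance amplification is Ĵ_hb(λ) = σ²(1+β)/(αλ(1-β)(2(1+β) - αλ)) for all stabilizing parameters. -/
open Matrix

/-- Modal variance amplification of the heavy-ball method: the (1,1) entry of
the solution of the 2×2 Lyapunov equation for `Â = [[0,1],[-β, 1+β-αλ]]`,
`B̂ = (0,1)ᵀ` equals `σ²(1+β)/(αλ(1-β)(2(1+β)-αλ))` for all stabilizing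
parameters (`0 ≤ β < 1`, `0 < αλ < 2(1+β)`). -/
theorem stmt_2 (α β lam σ : ℝ) (hβ0 : 0 ≤ β) (hβ1 : β < 1)
    (h1 : 0 < α * lam) (h2 : α * lam < 2 * (1 + β))
    (P : Matrix (Fin 2) (Fin 2) ℝ)
    (hlyap : P = !![0, 1; -β, 1 + β - α * lam] * P * (!![0, 1; -β, 1 + β - α * lam])ᵀ
        + σ ^ 2 • (!![(0 : ℝ); 1] * (!![(0 : ℝ); 1])ᵀ)) :
    P 0 0 = σ ^ 2 * (1 + β) / (α * lam * (1 - β) * (2 * (1 + β) - α * lam)) := by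
  have h00 := congr_fun (congr_fun hlyap 0) 0
  have h01 := congr_fun (congr_fun hlyap 0) 1
  have h10 := congr_fun (congr_fun hlyap 1) 0
  have h11 := congr_fun (congr_fun hlyap 1) 1
  simp [Matrix.mul_apply, Fin.sum_univ_two, Matrix.add_apply, Matrix.vecMul,
    Matrix.vecHead, Matrix.vecTail, dotProduct,
    Matrix.smul_apply, Matrix.transpose_apply, Fin.sum_univ_one] at h00 h01 h10 h11
  have hd1 : (0:ℝ) < 1 - β := by linarith
  have hd2 : (0:ℝ) < 2 * (1 + β) - α * lam := by linarith
  have hd3 : α * lam * (1 - β) * (2 * (1 + β) - α * lam) ≠ 0 :=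
    mul_ne_zero (mul_ne_zero h1.ne' hd1.ne') hd2.ne'
  rw [eq_div_iff hd3]
  linear_combination (α*lam*(1-β)*(2*(1+β)-α*lam) + (1+β)*β^2) * h00 + (1+β) * h11
    - (1+β-α*lam)*β*h01 - (1+β-α*lam)*β*h10
end

section
/- For Nesterov's accelerated method with modal dynamics Â(λ) = [[0,1],[-β(1-αλ), (1+β)(1-αλ)]], the modal variance amplification is Ĵ_na(λ) = σ²(1 + β(1-αλ))/(αλ(1 - β(1-αλ))(2(1+β) - (2β+1)αλ)) for all stabilizing parameters. -/
open Matrix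

/-- Modal variance amplification of Nesterov's accelerated method: the (1,1)
entry of the solution of the 2×2 Lyapunov equation for
`Â = [[0,1],[-β(1-αλ), (1+β)(1-αλ)]]`, `B̂ = (0,1)ᵀ` equals
`σ²(1+β(1-αλ))/(αλ(1-β(1-αλ))(2(1+β)-(2β+1)αλ))` for all stabilizing
parameters (`0 ≤ β < 1`, `0 < αλ < 2(1+β)/(2β+1)`). -/
theorem stmt_3 (α β lam σ : ℝ) (hβ0 : 0 ≤ β) (hβ1 : β < 1)
    (h1 : 0 < α * lam) (h2 : α * lam < 2 * (1 + β) / (2 * β + 1))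
    (P : Matrix (Fin 2) (Fin 2) ℝ)
    (hlyap : P = !![0, 1; -β * (1 - α * lam), (1 + β) * (1 - α * lam)] * P *
          (!![0, 1; -β * (1 - α * lam), (1 + β) * (1 - α * lam)])ᵀ
        + σ ^ 2 • (!![(0 : ℝ); 1] * (!![(0 : ℝ); 1])ᵀ)) :
    P 0 0 = σ ^ 2 * (1 + β * (1 - α * lam)) /
      (α * lam * (1 - β * (1 - α * lam)) * (2 * (1 + β) - (2 * β + 1) * (α * lam))) := by
  have e00 := congrFun (congrFun hlyap 0) 0
  have e01 := congrFun (congrFun hlyap 0) 1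
  have e10 := congrFun (congrFun hlyap 1) 0
  have e11 := congrFun (congrFun hlyap 1) 1
  simp [Matrix.mul_apply, Fin.sum_univ_two, Matrix.add_apply, Matrix.vecMul,
    dotProduct, Matrix.transpose_apply, Matrix.vecHead, Matrix.vecTail] at e00 e01 e10 e11
  have h2b : 0 < 2 * β + 1 := by linarith
  have h2' : (α * lam) * (2 * β + 1) < 2 * (1 + β) := (lt_div_iff₀ h2b).mp h2
  have hB : 0 < 1 - β * (1 - α * lam) := by nlinarith
  have hA : 0 < 1 + β * (1 - α * lam) := by nlinarith
  have hC : 0 < 2 * (1 + β) - (2 * β + 1) * (α * lam) := by nlinarith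
  have hqr : P 0 1 = P 1 0 := by
    have h : (1 - β * (1 - α * lam)) * (P 0 1 - P 1 0) = 0 := by
      linear_combination e01 - e10
    have := mul_eq_zero.mp h
    rcases this with h' | h'
    · exact absurd h' (ne_of_gt hB)
    · linarith
  have hq : (1 + β * (1 - α * lam)) * P 0 1 = (1 + β) * (1 - α * lam) * P 1 1 := by
    linear_combination e01 + β * (1 - α * lam) * hqr
  have hD : α * lam * (1 - β * (1 - α * lam)) * (2 * (1 + β) - (2 * β + 1) * (α * lam)) ≠ 0 := by
    positivity
  rw [eq_div_iff hD]
  linear_combination (1 + β * (1 - α * lam)) * e11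
    + (1 + β * (1 - α * lam)) * β * (1 + β) * (1 - α * lam) ^ 2 * hqr
    - 2 * β * (1 + β) * (1 - α * lam) ^ 2 * hq
    + ((1 + β * (1 - α * lam)) * (1 - (1 + β) ^ 2 * (1 - α * lam) ^ 2)
        + 2 * β * (1 + β) ^ 2 * (1 - α * lam) ^ 3) * e00
end

section
/- For the heavy-ball method with α_hb = 4/(√L+√m)² and β = (√κ-1)²/(√κ+1)², and gradient descent with α_gd = 2/(L+m), where κ = L/m, the ratio of modal variance contributions satisfies Ĵ_hb(λ)/Ĵ_gd(λ) = 1/(1-β²) = (√κ+1)⁴/(8√κ(κ+1)) for every λ ∈ [m, L], independent of λ. -/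
/-- The ratio between the modal variance contributions of the heavy-ball method
(with the rate-optimal parameters) and gradient descent (with `α = 2/(L+m)`)
equals `1/(1-β²) = (√κ+1)⁴/(8√κ(κ+1))` for every `λ ∈ [m, L]`. -/
theorem stmt_4 (m L lam : ℝ) (hm : 0 < m) (hκgt : 1 < L / m)
    (hlam : lam ∈ Set.Icc m L)
    (κ αgd αhb β Jgd Jhb : ℝ)
    (hκ : κ = L / m)
    (hαgd : αgd = 2 / (L + m))
    (hβ : β = (Real.sqrt κ - 1) ^ 2 / (Real.sqrt κ + 1) ^ 2)
    (hαhb : αhb = 4 / (Real.sqrt L + Real.sqrt m) ^ 2)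
    (hJgd : Jgd = 1 / (αgd * lam * (2 - αgd * lam)))
    (hJhb : Jhb = (1 + β) / (αhb * lam * (1 - β) * (2 * (1 + β) - αhb * lam))) :
    Jhb / Jgd = 1 / (1 - β ^ 2) ∧
    Jhb / Jgd = (Real.sqrt κ + 1) ^ 4 / (8 * Real.sqrt κ * (κ + 1)) := by
  obtain ⟨hlm, hlL⟩ := hlam
  have hmL : m < L := by have := (one_lt_div hm).mp hκgt; linarith
  have hL : 0 < L := hm.trans hmL
  set a := Real.sqrt L with ha
  set b := Real.sqrt m with hb
  have hb0 : 0 < b := Real.sqrt_pos.mpr hm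
  have ha0 : 0 < a := Real.sqrt_pos.mpr hL
  have hab : b < a := Real.sqrt_lt_sqrt hm.le hmL
  have ha2 : a ^ 2 = L := Real.sq_sqrt hL.le
  have hb2 : b ^ 2 = m := Real.sq_sqrt hm.le
  have hκs : Real.sqrt κ = a / b := by rw [hκ, Real.sqrt_div hL.le]
  have hab0 : (0:ℝ) < a + b := by linarith
  have hβval : β = (a - b) ^ 2 / (a + b) ^ 2 := by
    rw [hβ, hκs]; field_simp
  have hβlt : β < 1 := by
    rw [hβval, div_lt_one (by positivity)]; nlinarith
  have hβ0 : 0 ≤ β := by rw [hβval]; positivity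
  have h1β : (0:ℝ) < 1 - β := by linarith
  have h2β : (0:ℝ) < 1 + β := by linarith
  have hβ2 : (0:ℝ) < 1 - β ^ 2 := by nlinarith
  have h2βv : 1 + β = 2 * (a ^ 2 + b ^ 2) / (a + b) ^ 2 := by
    rw [hβval]; field_simp; ring
  have hrel : αhb = (1 + β) * αgd := by
    rw [h2βv, hαgd, hαhb, ← ha2, ← hb2]
    field_simp
    ring
  -- positivity of gd denominator
  have hlam0 : 0 < lam := hm.trans_le hlm
  have hαgd0 : 0 < αgd := by rw [hαgd]; positivity
  have hαl2 : αgd * lam < 2 := by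
    rw [hαgd, div_mul_eq_mul_div, div_lt_iff₀ (by linarith)]
    linarith
  set D := αgd * lam * (2 - αgd * lam) with hD
  have hD0 : 0 < D := by
    apply mul_pos (mul_pos hαgd0 hlam0); linarith
  have e : Jhb = 1 / ((1 - β ^ 2) * D) := by
    rw [hJhb, show αhb * lam * (1 - β) * (2 * (1 + β) - αhb * lam)
        = (1 + β) * ((1 - β ^ 2) * D) by rw [hrel, hD]; ring]
    have hne1 : (1:ℝ) + β ≠ 0 := by linarith
    have hne2 : (1 - β ^ 2) * D ≠ 0 := ne_of_gt (mul_pos hβ2 hD0)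
    rw [div_eq_div_iff (mul_ne_zero hne1 hne2) hne2]
    ring
  have h1 : Jhb / Jgd = 1 / (1 - β ^ 2) := by
    rw [e, hJgd]
    rw [div_div_div_eq]
    field_simp
  refine ⟨h1, ?_⟩
  rw [h1, hκs, hκ, ← ha2, ← hb2]
  have hβ2v : 1 - β ^ 2 = 8 * a * b * (a ^ 2 + b ^ 2) / (a + b) ^ 4 := by
    rw [hβval]; field_simp; ring
  rw [hβ2v]
  field_simp
end

section
/- For Nesterov's method with α = 4/(3L+m) and β = (√(3κ+1)-2)/(√(3κ+1)+2), writing κ̄ = 3κ+1, the modal variance amplification satisfies Ĵ_na(m) = κ̄²(κ̄ - 2√κ̄ + 2)/(32(√κ̄ - 1)³) and Ĵ_na(L) = 9κ̄²(κ̄ + 2√κ̄ - 2)/(32(κ̄-1)(κ̄ - √κ̄ + 1)(2√κ̄ - 1)). -/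
set_option maxHeartbeats 1000000 in
/-- For Nesterov's method with the rate-optimal parameters `α = 4/(3L+m)` and
`β = (√(3κ+1)-2)/(√(3κ+1)+2)`, writing `κ̄ = 3κ+1`, the modal variance
amplification satisfies the stated closed-form expressions at `λ = m` and
`λ = L`. -/
theorem stmt_6 (m L : ℝ) (hm : 0 < m) (hκgt : 1 < L / m)
    (κ κb α β : ℝ) (J : ℝ → ℝ)
    (hκ : κ = L / m) (hκb : κb = 3 * κ + 1)
    (hα : α = 4 / (3 * L + m))
    (hβ : β = (Real.sqrt κb - 2) / (Real.sqrt κb + 2))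
    (hJ : ∀ lam, J lam = (1 + β * (1 - α * lam)) /
      (α * lam * (1 - β * (1 - α * lam)) * (2 * (1 + β) - (2 * β + 1) * (α * lam)))) :
    J m = κb ^ 2 * (κb - 2 * Real.sqrt κb + 2) / (32 * (Real.sqrt κb - 1) ^ 3) ∧
    J L = 9 * κb ^ 2 * (κb + 2 * Real.sqrt κb - 2) /
      (32 * (κb - 1) * (κb - Real.sqrt κb + 1) * (2 * Real.sqrt κb - 1)) := by
  have hm' : m ≠ 0 := ne_of_gt hm
  have hκ4 : 4 < κb := by rw [hκb, hκ]; nlinarith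
  set s := Real.sqrt κb with hs
  have hs2 : s ^ 2 = κb := Real.sq_sqrt (by linarith)
  have hsgt : 2 < s := by
    have h4 : Real.sqrt 4 < Real.sqrt κb := Real.sqrt_lt_sqrt (by norm_num) hκ4
    have : Real.sqrt 4 = 2 := by
      rw [show (4:ℝ) = 2^2 by norm_num, Real.sqrt_sq]; norm_num
    linarith
  have hs0 : s ≠ 0 := by positivity
  have hsp2 : s + 2 ≠ 0 := by linarith
  have hsm1 : (0:ℝ) < s - 1 := by linarith
  have hL : L = (s ^ 2 - 1) / 3 * m := by
    have h1 : L = κ * m := by rw [hκ]; field_simp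
    rw [h1, show κ = (s ^ 2 - 1) / 3 by rw [hs2, hκb]; ring]
  have hden : 3 * L + m = s ^ 2 * m := by rw [hL]; ring
  have hαm : α * m = 4 / s ^ 2 := by
    rw [hα, hden]; field_simp
  have hαL : α * L = 4 * (s ^ 2 - 1) / (3 * s ^ 2) := by
    rw [hα, hden, hL]; field_simp
  rw [← hs2]
  constructor
  · rw [hJ, hαm, hβ]
    have h2 : 1 - (s - 2) / (s + 2) * (1 - 4 / s ^ 2) = 4 * (s - 1) / s ^ 2 := by
      field_simp; ring
    have h3 : 2 * (1 + (s - 2) / (s + 2)) - (2 * ((s - 2) / (s + 2)) + 1) * (4 / s ^ 2)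
        = 4 * (s - 1) ^ 2 / s ^ 2 := by
      field_simp; ring
    rw [h2, h3, div_eq_div_iff]
    · field_simp; ring
    · positivity
    · positivity
  · rw [hJ, hαL, hβ]
    have h2 : 1 - (s - 2) / (s + 2) * (1 - 4 * (s ^ 2 - 1) / (3 * s ^ 2))
        = (4 * s ^ 2 - 4 * s + 4) / (3 * s ^ 2) := by
      field_simp; ring
    have h3 : 2 * (1 + (s - 2) / (s + 2)) - (2 * ((s - 2) / (s + 2)) + 1)
          * (4 * (s ^ 2 - 1) / (3 * s ^ 2))
        = 4 * (2 * s - 1) / (3 * s ^ 2) := by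
      field_simp; ring
    rw [h2, h3, div_eq_div_iff]
    · field_simp; ring
    · have e1 : (0:ℝ) < 4 * (s ^ 2 - 1) / (3 * s ^ 2) := by
        apply div_pos (by nlinarith) (by positivity)
      have e2 : (0:ℝ) < (4 * s ^ 2 - 4 * s + 4) / (3 * s ^ 2) := by
        apply div_pos (by nlinarith) (by positivity)
      have e3 : (0:ℝ) < 4 * (2 * s - 1) / (3 * s ^ 2) := by
        apply div_pos (by nlinarith) (by positivity)
      exact ne_of_gt (mul_pos (mul_pos e1 e2) e3)
    · have p1 : (0:ℝ) < s ^ 2 - 1 := by nlinarith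
      have p2 : (0:ℝ) < s ^ 2 - s + 1 := by nlinarith
      have p3 : (0:ℝ) < 2 * s - 1 := by linarith
      exact ne_of_gt (mul_pos (mul_pos (mul_pos (by norm_num : (0:ℝ) < 32) p1) p2) p3)
end

section
/- Suppose real numbers satisfy a_L ≤ a_i ≤ a_m, g(λ_i) = g for all i (constant), with a_L ≤ a_m. Then for any n eigenvalues λ_1 = L, λ_n = m, and λ_i ∈ [m,L] for 2 ≤ i ≤ n-1, the ratio (Σ_i Ĵ_na(λ_i))/(Σ_i Ĵ_gd(λ_i)) is bounded below by (Ĵ_na(m) + (n-1)Ĵ_na(L))/(Ĵ_gd(m) + (n-1)Ĵ_gd(L)) and above by (Ĵ_na(L) + (n-1)Ĵ_na(m))/(Ĵ_gd(L) + (n-1)Ĵ_gd(m)), given that Ĵ_gd(λ) is constant across λ ∈ {m,L} with Ĵ_gd(λ_i) ≤ Ĵ_gd(m) for all i, the ratio Ĵ_na(λ)/Ĵ_gd(λ) is decreasing in λ, and Ĵ_na(m) ≥ Ĵ_na(L). -/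
/-- Bounds on the ratio `J_na/J_gd = (Σᵢ Ĵ_na(λᵢ))/(Σᵢ Ĵ_gd(λᵢ))` when:
(i) `Ĵ_gd(m) = Ĵ_gd(L)` and `Ĵ_gd(λᵢ) ≤ Ĵ_gd(m)` for all i,
(ii) `λ ↦ Ĵ_na(λ)/Ĵ_gd(λ)` is nonincreasing on `[m,L]`,
(iii) `Ĵ_na(m) ≥ Ĵ_na(L)`,
with `λ₁ = L`, `λₙ = m`, all `λᵢ ∈ [m,L]`, and both functions positive. -/
theorem stmt_9 (n : ℕ) (hn : 2 ≤ n) (m L : ℝ) (hm : 0 < m) (hmL : m ≤ L)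
    (Jna Jgd : ℝ → ℝ) (lam : Fin n → ℝ)
    (hmem : ∀ i, lam i ∈ Set.Icc m L)
    (hfirst : lam ⟨0, by omega⟩ = L) (hlast : lam ⟨n - 1, by omega⟩ = m)
    (hpos : ∀ x ∈ Set.Icc m L, 0 < Jgd x ∧ 0 < Jna x)
    (hgd_eq : Jgd m = Jgd L)
    (hgd_max : ∀ i, Jgd (lam i) ≤ Jgd m)
    (hratio : ∀ x ∈ Set.Icc m L, ∀ y ∈ Set.Icc m L, x ≤ y →
      Jna y / Jgd y ≤ Jna x / Jgd x)
    (hna : Jna L ≤ Jna m) :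
    (Jna m + ((n : ℝ) - 1) * Jna L) / (Jgd m + ((n : ℝ) - 1) * Jgd L) ≤
      (∑ i, Jna (lam i)) / (∑ i, Jgd (lam i)) ∧
    (∑ i, Jna (lam i)) / (∑ i, Jgd (lam i)) ≤
      (Jna L + ((n : ℝ) - 1) * Jna m) / (Jgd L + ((n : ℝ) - 1) * Jgd m) := by
  have hn1 : (2:ℝ) ≤ (n:ℝ) := by exact_mod_cast hn
  have hmemm : m ∈ Set.Icc m L := ⟨le_refl m, hmL⟩
  have hmemL : L ∈ Set.Icc m L := ⟨hmL, le_refl L⟩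
  set g := Jgd m with hg
  have hgpos : 0 < g := (hpos m hmemm).1
  have hgL : Jgd L = g := hgd_eq.symm
  have hgdpos : ∀ i, 0 < Jgd (lam i) := fun i => (hpos _ (hmem i)).1
  set A := ∑ i, Jna (lam i) with hA
  set B := ∑ i, Jgd (lam i) with hB
  have hBpos : 0 < B :=
    Finset.sum_pos (fun i _ => hgdpos i) ⟨⟨0, by omega⟩, Finset.mem_univ _⟩
  -- B ≤ n * g
  have hBle : B ≤ (n:ℝ) * g := by
    calc B ≤ ∑ _i : Fin n, g := Finset.sum_le_sum (fun i _ => hgd_max i)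
      _ = (n:ℝ) * g := by simp [Finset.sum_const, nsmul_eq_mul]
  -- per-term inequalities
  have hlow : ∀ i, Jna L * Jgd (lam i) ≤ Jna (lam i) * g := by
    intro i
    have h := hratio (lam i) (hmem i) L hmemL (hmem i).2
    have := (div_le_div_iff₀ (hpos L hmemL).1 (hgdpos i)).mp h
    rw [hgL] at this; linarith
  have hhigh : ∀ i, Jna (lam i) * g ≤ Jna m * Jgd (lam i) := by
    intro i
    have h := hratio m hmemm (lam i) (hmem i) (hmem i).1
    have := (div_le_div_iff₀ (hgdpos i) hgpos).mp h
    linarith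
  -- key sum bounds
  have hsum1 : (∑ i, (Jna (lam i) * g - Jna L * Jgd (lam i))) = A * g - Jna L * B := by
    rw [Finset.sum_sub_distrib, ← Finset.sum_mul, ← Finset.mul_sum]
  have key1 : g * (Jna m - Jna L) ≤ A * g - Jna L * B := by
    rw [← hsum1]
    have hj : lam (⟨n - 1, by omega⟩ : Fin n) = m := hlast
    have := Finset.single_le_sum
      (f := fun i => Jna (lam i) * g - Jna L * Jgd (lam i))
      (fun i _ => sub_nonneg.mpr (hlow i)) (Finset.mem_univ (⟨n - 1, by omega⟩ : Fin n))
    simp only [hj] at this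
    have hgm : Jgd m = g := rfl
    rw [hgm] at this
    nlinarith
  have hsum2 : (∑ i, (Jna m * Jgd (lam i) - Jna (lam i) * g)) = Jna m * B - A * g := by
    rw [Finset.sum_sub_distrib, ← Finset.sum_mul, ← Finset.mul_sum]
  have key2 : g * (Jna m - Jna L) ≤ Jna m * B - A * g := by
    rw [← hsum2]
    have hj : lam (⟨0, by omega⟩ : Fin n) = L := hfirst
    have := Finset.single_le_sum
      (f := fun i => Jna m * Jgd (lam i) - Jna (lam i) * g)
      (fun i _ => sub_nonneg.mpr (hhigh i)) (Finset.mem_univ (⟨0, by omega⟩ : Fin n))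
    simp only [hj, hgL] at this
    nlinarith
  have p2 : (Jna m - Jna L) * B ≤ (Jna m - Jna L) * ((n:ℝ) * g) :=
    mul_le_mul_of_nonneg_left hBle (by linarith)
  have hDpos : 0 < g + ((n:ℝ) - 1) * g := by nlinarith
  constructor
  · rw [hgL, div_le_div_iff₀ hDpos hBpos]
    nlinarith [mul_le_mul_of_nonneg_left key1 (by linarith : (0:ℝ) ≤ (n:ℝ))]
  · rw [hgL, div_le_div_iff₀ hBpos hDpos]
    nlinarith [mul_le_mul_of_nonneg_left key2 (by linarith : (0:ℝ) ≤ (n:ℝ))]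
end

section
/- For gradient descent with α = 2/(L+m) on an n-dimensional strongly convex quadratic with all Hessian eigenvalues in [m,L] and extreme eigenvalues m and L, the variance amplification J_gd = Σ_i Ĵ_gd(λ_i) (σ=1) satisfies (κ-1)²/(2κ) + n ≤ J_gd ≤ n(κ+1)²/(4κ), where κ = L/m. -/
lemma aux_bounds (m L x : ℝ) (hm : 0 < m) (hmL : m ≤ L)
    (hx1 : m ≤ x) (hx2 : x ≤ L) :
    1 ≤ 1 / ((2 / (L + m)) * x * (2 - (2 / (L + m)) * x)) ∧
    1 / ((2 / (L + m)) * x * (2 - (2 / (L + m)) * x)) ≤ (L + m) ^ 2 / (4 * L * m) := by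
  have hLm : 0 < L + m := by linarith
  have hL : 0 < L := lt_of_lt_of_le hm hmL
  have hxpos : 0 < x := lt_of_lt_of_le hm hx1
  have ht : (2 / (L + m)) * x * (2 - (2 / (L + m)) * x)
      = 4 * x * (L + m - x) / (L + m) ^ 2 := by
    field_simp; ring
  rw [ht]
  have htpos : 0 < 4 * x * (L + m - x) / (L + m) ^ 2 := by
    apply div_pos
    · nlinarith
    · positivity
  have hden : 0 < 4 * x * (L + m - x) := by nlinarith
  rw [one_div_div]
  constructor
  · rw [le_div_iff₀ hden]
    nlinarith [sq_nonneg (L + m - 2 * x)]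
  · apply div_le_div_of_nonneg_left (by positivity) (by positivity)
    nlinarith [mul_nonneg (sub_nonneg.2 hx1) (sub_nonneg.2 hx2)]

lemma aux_val (m L : ℝ) (hm : 0 < m) (hL : 0 < L) :
    1 / ((2 / (L + m)) * L * (2 - (2 / (L + m)) * L)) = (L + m) ^ 2 / (4 * L * m) ∧
    1 / ((2 / (L + m)) * m * (2 - (2 / (L + m)) * m)) = (L + m) ^ 2 / (4 * L * m) := by
  have hLm : (L + m) ≠ 0 := by positivity
  have h1 : (2 / (L + m)) * L * (2 - (2 / (L + m)) * L) = 4 * L * m / (L + m) ^ 2 := by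
    field_simp; ring
  have h2 : (2 / (L + m)) * m * (2 - (2 / (L + m)) * m) = 4 * L * m / (L + m) ^ 2 := by
    field_simp; ring
  rw [h1, h2, one_div_div]
  exact ⟨rfl, rfl⟩

/-- Tight bounds on the variance amplification of gradient descent with
`α = 2/(L+m)`: for Hessian eigenvalues `λ₁ = L ≥ ... ≥ λₙ = m > 0` in `[m,L]`,
`(κ-1)²/(2κ) + n ≤ J_gd = Σᵢ Ĵ_gd(λᵢ) ≤ n(κ+1)²/(4κ)` with `κ = L/m`, `σ = 1`. -/
theorem stmt_10 (n : ℕ) (hn : 0 < n) (m L : ℝ) (hm : 0 < m) (hmL : m ≤ L)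
    (lam : Fin n → ℝ) (hmem : ∀ i, lam i ∈ Set.Icc m L)
    (hfirst : lam ⟨0, hn⟩ = L) (hlast : lam ⟨n - 1, by omega⟩ = m)
    (κ α : ℝ) (hκ : κ = L / m) (hα : α = 2 / (L + m)) :
    (κ - 1) ^ 2 / (2 * κ) + n ≤ ∑ i, 1 / (α * lam i * (2 - α * lam i)) ∧
    ∑ i, 1 / (α * lam i * (2 - α * lam i)) ≤ n * (κ + 1) ^ 2 / (4 * κ) := by
  subst hκ hα
  have hL : 0 < L := lt_of_lt_of_le hm hmL
  set C : ℝ := (L + m) ^ 2 / (4 * L * m) with hC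
  have haux : ∀ i : Fin n, 1 ≤ 1 / (2 / (L + m) * lam i * (2 - 2 / (L + m) * lam i)) ∧
      1 / (2 / (L + m) * lam i * (2 - 2 / (L + m) * lam i)) ≤ C := fun i =>
    aux_bounds m L (lam i) hm hmL (hmem i).1 (hmem i).2
  have hk : 0 < L / m := by positivity
  have hk1 : 1 ≤ L / m := (one_le_div hm).2 hmL
  have hCeq : C = (L / m + 1) ^ 2 / (4 * (L / m)) := by
    rw [hC]; field_simp
  have hkey : (L / m - 1) ^ 2 / (2 * (L / m)) + 2 = (L / m + 1) ^ 2 / (2 * (L / m)) := by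
    field_simp; ring
  constructor
  · -- lower bound
    rcases Nat.lt_or_ge n 2 with h1 | h2
    · -- n = 1
      have hn1 : n = 1 := by omega
      subst hn1
      have hLm : L = m := by rw [← hfirst]; exact hlast
      subst hLm
      have h1 := (haux ⟨0, hn⟩).1
      rw [Fin.sum_univ_one, div_self hL.ne']
      norm_num at h1 ⊢
      linarith
    · -- n ≥ 2
      have hne' : (⟨n - 1, by omega⟩ : Fin n) ≠ ⟨0, hn⟩ := by
        simp only [ne_eq, Fin.mk.injEq]; omega
      rw [← Finset.sum_erase_add _ _ (Finset.mem_univ (⟨0, hn⟩ : Fin n)),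
          ← Finset.sum_erase_add _ _ (Finset.mem_erase.2 ⟨hne', Finset.mem_univ _⟩)]
      set s := (Finset.univ.erase (⟨0, hn⟩ : Fin n)).erase ⟨n - 1, by omega⟩ with hs
      have hcard : s.card = n - 2 := by
        rw [hs, Finset.card_erase_of_mem (Finset.mem_erase.2 ⟨hne', Finset.mem_univ _⟩),
            Finset.card_erase_of_mem (Finset.mem_univ _)]
        simp only [Finset.card_univ, Fintype.card_fin]
        omega
      have hsum1 : ((n : ℝ) - 2) ≤
          ∑ i ∈ s, 1 / (2 / (L + m) * lam i * (2 - 2 / (L + m) * lam i)) := by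
        have := Finset.card_nsmul_le_sum s
          (fun i => 1 / (2 / (L + m) * lam i * (2 - 2 / (L + m) * lam i))) 1
          (fun i _ => (haux i).1)
        rw [nsmul_eq_mul, mul_one, hcard] at this
        calc ((n : ℝ) - 2) = ((n - 2 : ℕ) : ℝ) := by
              rw [Nat.cast_sub h2]; norm_num
          _ ≤ _ := this
      have hv := aux_val m L hm hL
      have hfL : 1 / (2 / (L + m) * lam ⟨0, hn⟩ * (2 - 2 / (L + m) * lam ⟨0, hn⟩)) = C := by
        rw [hfirst]; exact hv.1
      have hfm : 1 / (2 / (L + m) * lam ⟨n - 1, by omega⟩ *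
          (2 - 2 / (L + m) * lam ⟨n - 1, by omega⟩)) = C := by
        rw [hlast]; exact hv.2
      rw [hfL, hfm, hCeq]
      have : (L / m + 1) ^ 2 / (2 * (L / m)) = 2 * ((L / m + 1) ^ 2 / (4 * (L / m))) := by
        ring
      linarith [hkey, hsum1]
  · calc ∑ i, 1 / (2 / (L + m) * lam i * (2 - 2 / (L + m) * lam i))
        ≤ ∑ _i : Fin n, C := Finset.sum_le_sum fun i _ => (haux i).2
      _ = n * C := by simp [mul_comm]
      _ = n * (L / m + 1) ^ 2 / (4 * (L / m)) := by rw [hCeq]; ring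
end

section
/- Suppose there exist X ⪰ 0 and λ ≥ 0 such that [[A^T X A - X + C_z^T C_z, A^T X B_u],[B_u^T X A, B_u^T X B_u]] + λ [[C_y^T,0],[0,I]] Π [[C_y,0],[0,I]] ⪯ 0, and the nonlinearity satisfies [y;u]^T Π [y;u] ≥ 0 pointwise. Then the stochastic system ψ^{t+1} = Aψ^t + σB_w w^t + B_u Δ(C_y ψ^t), z^t = C_z ψ^t, driven by zero-mean white noise w^t with identity covariance, satisfies limsup_{T→∞} (1/T) Σ_{t=1}^T E(‖z^t‖²) ≤ σ² trace(B_w^T X B_w). -/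
open Matrix MeasureTheory ProbabilityTheory Filter

section Aux

lemma aux_dot_transpose {m n : Type*} [Fintype m] [Fintype n]
    (Y : Matrix m n ℝ) (p : n → ℝ) (q : m → ℝ) :
    p ⬝ᵥ (Yᵀ *ᵥ q) = (Y *ᵥ p) ⬝ᵥ q := by
  rw [dotProduct_mulVec, vecMul_transpose]

lemma aux_sq_sum_eq_dot {n : ℕ} (x : Fin n → ℝ) : ∑ i, (x i) ^ 2 = x ⬝ᵥ x := by
  simp [dotProduct, sq]

lemma aux_measurable_mulVec {m n : ℕ} {Ω : Type*} [MeasurableSpace Ω]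
    (M : Matrix (Fin m) (Fin n) ℝ) {f : Ω → Fin n → ℝ} (hf : Measurable f) :
    Measurable fun ω => M *ᵥ f ω := by
  apply measurable_pi_lambda
  intro i
  simp only [mulVec, dotProduct]
  exact Finset.measurable_sum _ fun j _ => measurable_const.mul ((measurable_pi_apply j).comp hf)

lemma aux_measurable_dot {n : ℕ} {Ω : Type*} [MeasurableSpace Ω]
    {f g : Ω → Fin n → ℝ} (hf : Measurable f) (hg : Measurable g) :
    Measurable fun ω => f ω ⬝ᵥ g ω := by
  simp only [dotProduct]
  exact Finset.measurable_sum _ fun j _ =>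
    ((measurable_pi_apply j).comp hf).mul ((measurable_pi_apply j).comp hg)

lemma aux_quad_expand {nψ nu : ℕ} (X : Matrix (Fin nψ) (Fin nψ) ℝ)
    (A : Matrix (Fin nψ) (Fin nψ) ℝ) (Bu : Matrix (Fin nψ) (Fin nu) ℝ)
    (p : Fin nψ → ℝ) (u : Fin nu → ℝ) :
    (A *ᵥ p + Bu *ᵥ u) ⬝ᵥ (X *ᵥ (A *ᵥ p + Bu *ᵥ u))
      = p ⬝ᵥ ((Aᵀ * X * A) *ᵥ p) + p ⬝ᵥ ((Aᵀ * X * Bu) *ᵥ u)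
        + u ⬝ᵥ ((Buᵀ * X * A) *ᵥ p) + u ⬝ᵥ ((Buᵀ * X * Bu) *ᵥ u) := by
  simp only [← mulVec_mulVec, aux_dot_transpose, mulVec_add, dotProduct_add, add_dotProduct]
  ring

lemma aux_lmi_pointwise {nψ nu nz ny : ℕ} (lamb : ℝ) (hlamb : 0 ≤ lamb)
    (A : Matrix (Fin nψ) (Fin nψ) ℝ) (Bu : Matrix (Fin nψ) (Fin nu) ℝ)
    (Cz : Matrix (Fin nz) (Fin nψ) ℝ) (Cy : Matrix (Fin ny) (Fin nψ) ℝ)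
    (Pmat : Matrix (Fin ny ⊕ Fin nu) (Fin ny ⊕ Fin nu) ℝ)
    (X : Matrix (Fin nψ) (Fin nψ) ℝ)
    (hLMI : (-(Matrix.fromBlocks (Aᵀ * X * A - X + Czᵀ * Cz) (Aᵀ * X * Bu)
          (Buᵀ * X * A) (Buᵀ * X * Bu)
        + lamb • (Matrix.fromBlocks Cyᵀ 0 0 (1 : Matrix (Fin nu) (Fin nu) ℝ) * Pmat *
            Matrix.fromBlocks Cy 0 0 (1 : Matrix (Fin nu) (Fin nu) ℝ)))).PosSemidef)
    (p : Fin nψ → ℝ) (u : Fin nu → ℝ)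
    (hq : 0 ≤ Sum.elim (Cy *ᵥ p) u ⬝ᵥ (Pmat *ᵥ Sum.elim (Cy *ᵥ p) u)) :
    (Cz *ᵥ p) ⬝ᵥ (Cz *ᵥ p) + (A *ᵥ p + Bu *ᵥ u) ⬝ᵥ (X *ᵥ (A *ᵥ p + Bu *ᵥ u))
      ≤ p ⬝ᵥ (X *ᵥ p) := by
  have h0 := hLMI.dotProduct_mulVec_nonneg (Sum.elim p u)
  rw [star_trivial, neg_mulVec, dotProduct_neg, le_neg, neg_zero] at h0
  rw [add_mulVec, dotProduct_add, smul_mulVec, dotProduct_smul, smul_eq_mul] at h0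
  have hE : Matrix.fromBlocks Cy 0 0 (1 : Matrix (Fin nu) (Fin nu) ℝ) *ᵥ Sum.elim p u
      = Sum.elim (Cy *ᵥ p) u := by
    rw [fromBlocks_mulVec]
    simp [Sum.elim_comp_inl, Sum.elim_comp_inr]
  have hT : (Matrix.fromBlocks Cyᵀ 0 0 (1 : Matrix (Fin nu) (Fin nu) ℝ))
      = (Matrix.fromBlocks Cy 0 0 (1 : Matrix (Fin nu) (Fin nu) ℝ))ᵀ := by
    rw [fromBlocks_transpose]; simp
  have hsecond : 0 ≤ Sum.elim p u ⬝ᵥ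
      ((Matrix.fromBlocks Cyᵀ 0 0 (1 : Matrix (Fin nu) (Fin nu) ℝ) * Pmat *
        Matrix.fromBlocks Cy 0 0 (1 : Matrix (Fin nu) (Fin nu) ℝ)) *ᵥ Sum.elim p u) := by
    rw [hT, ← mulVec_mulVec, ← mulVec_mulVec, aux_dot_transpose, hE]
    exact hq
  have hfirst : Sum.elim p u ⬝ᵥ
      ((Matrix.fromBlocks (Aᵀ * X * A - X + Czᵀ * Cz) (Aᵀ * X * Bu)
        (Buᵀ * X * A) (Buᵀ * X * Bu)) *ᵥ Sum.elim p u)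
      = (A *ᵥ p + Bu *ᵥ u) ⬝ᵥ (X *ᵥ (A *ᵥ p + Bu *ᵥ u)) - p ⬝ᵥ (X *ᵥ p)
        + (Cz *ᵥ p) ⬝ᵥ (Cz *ᵥ p) := by
    rw [fromBlocks_mulVec]
    simp only [Sum.elim_comp_inl, Sum.elim_comp_inr, sumElim_dotProduct_sumElim]
    rw [aux_quad_expand]
    simp only [add_mulVec, sub_mulVec, dotProduct_add, dotProduct_sub, ← mulVec_mulVec,
      aux_dot_transpose]
    ring
  nlinarith [mul_nonneg hlamb hsecond]

variable {Ω : Type*} [MeasurableSpace Ω] {μ : Measure Ω}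

lemma aux_integrable_pair {n : ℕ} {f : Ω → Fin n → ℝ} (hf : Measurable f)
    (hint : Integrable (fun ω => ∑ i, (f ω i) ^ 2) μ) (i j : Fin n) :
    Integrable (fun ω => f ω i * f ω j) μ := by
  apply Integrable.mono' hint
    (((measurable_pi_apply i).comp hf).mul ((measurable_pi_apply j).comp hf)).aestronglyMeasurable
  filter_upwards with ω
  have h1 : (f ω i) ^ 2 ≤ ∑ k, (f ω k) ^ 2 :=
    Finset.single_le_sum (f := fun k => (f ω k) ^ 2) (fun k _ => sq_nonneg _) (Finset.mem_univ i)
  have h2 : (f ω j) ^ 2 ≤ ∑ k, (f ω k) ^ 2 :=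
    Finset.single_le_sum (f := fun k => (f ω k) ^ 2) (fun k _ => sq_nonneg _) (Finset.mem_univ j)
  have h3 : |f ω i * f ω j| ≤ ((f ω i) ^ 2 + (f ω j) ^ 2) / 2 := by
    rw [abs_mul]
    nlinarith [sq_nonneg (|f ω i| - |f ω j|), sq_abs (f ω i), sq_abs (f ω j),
      abs_nonneg (f ω i), abs_nonneg (f ω j)]
  calc ‖f ω i * f ω j‖ = |f ω i * f ω j| := rfl
    _ ≤ ((f ω i) ^ 2 + (f ω j) ^ 2) / 2 := h3
    _ ≤ ∑ k, (f ω k) ^ 2 := by linarith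

lemma aux_integrable_coord {n : ℕ} [IsFiniteMeasure μ] {f : Ω → Fin n → ℝ} (hf : Measurable f)
    (hint : Integrable (fun ω => ∑ i, (f ω i) ^ 2) μ) (i : Fin n) :
    Integrable (fun ω => f ω i) μ := by
  apply Integrable.mono' ((integrable_const (1:ℝ)).add hint)
    ((measurable_pi_apply i).comp hf).aestronglyMeasurable
  filter_upwards with ω
  have h1 : (f ω i) ^ 2 ≤ ∑ k, (f ω k) ^ 2 :=
    Finset.single_le_sum (f := fun k => (f ω k) ^ 2) (fun k _ => sq_nonneg _) (Finset.mem_univ i)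
  have h2 : |f ω i| ≤ 1 + (f ω i) ^ 2 := by
    rcases abs_cases (f ω i) with ⟨h, _⟩ | ⟨h, _⟩ <;> nlinarith [sq_nonneg (f ω i - 1), sq_nonneg (f ω i + 1)]
  calc ‖f ω i‖ = |f ω i| := rfl
    _ ≤ 1 + (f ω i) ^ 2 := h2
    _ ≤ 1 + ∑ k, (f ω k) ^ 2 := by linarith

lemma aux_dot_as_sum {n m : ℕ} (Y : Matrix (Fin n) (Fin m) ℝ) (v : Fin n → ℝ) (x : Fin m → ℝ) :
    v ⬝ᵥ (Y *ᵥ x) = ∑ i, ∑ j, Y i j * (v i * x j) := by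
  simp only [dotProduct, mulVec, Finset.mul_sum]
  refine Finset.sum_congr rfl fun i _ => Finset.sum_congr rfl fun j _ => by ring

lemma aux_integrable_quadform {n : ℕ} {f : Ω → Fin n → ℝ} (hf : Measurable f)
    (hint : Integrable (fun ω => ∑ i, (f ω i) ^ 2) μ) (Y : Matrix (Fin n) (Fin n) ℝ) :
    Integrable (fun ω => f ω ⬝ᵥ (Y *ᵥ f ω)) μ := by
  have h : (fun ω => f ω ⬝ᵥ (Y *ᵥ f ω)) = fun ω => ∑ i, ∑ j, Y i j * (f ω i * f ω j) := by
    funext ω; exact aux_dot_as_sum Y (f ω) (f ω)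
  rw [h]
  exact integrable_finset_sum _ fun i _ => integrable_finset_sum _ fun j _ =>
    (aux_integrable_pair hf hint i j).const_mul _

end Aux

/-- LMI-based bound on noise amplification (Lemma 1 of the paper): if
`X ⪰ 0`, `λ ≥ 0` satisfy the LMI and the nonlinearity `Δ` satisfies the
quadratic constraint `[y;u]ᵀ Π [y;u] ≥ 0` with `u = Δ(y)`, then the stochastic
system `ψ^{t+1} = Aψ^t + σ B_w w^t + B_u Δ(C_y ψ^t)`, `z^t = C_z ψ^t` driven by
zero-mean identity-covariance white noise satisfies
`limsup_T (1/T) Σ_{t=1}^T E‖z^t‖² ≤ σ² trace(B_wᵀ X B_w)`. -/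
theorem stmt_13 (nψ nw nu nz ny : ℕ) (σ lamb : ℝ) (hlamb : 0 ≤ lamb)
    (A : Matrix (Fin nψ) (Fin nψ) ℝ) (Bw : Matrix (Fin nψ) (Fin nw) ℝ)
    (Bu : Matrix (Fin nψ) (Fin nu) ℝ) (Cz : Matrix (Fin nz) (Fin nψ) ℝ)
    (Cy : Matrix (Fin ny) (Fin nψ) ℝ)
    (Pmat : Matrix (Fin ny ⊕ Fin nu) (Fin ny ⊕ Fin nu) ℝ)
    (X : Matrix (Fin nψ) (Fin nψ) ℝ) (hX : X.PosSemidef)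
    (hLMI : (-(Matrix.fromBlocks (Aᵀ * X * A - X + Czᵀ * Cz) (Aᵀ * X * Bu)
          (Buᵀ * X * A) (Buᵀ * X * Bu)
        + lamb • (Matrix.fromBlocks Cyᵀ 0 0 (1 : Matrix (Fin nu) (Fin nu) ℝ) * Pmat *
            Matrix.fromBlocks Cy 0 0 (1 : Matrix (Fin nu) (Fin nu) ℝ)))).PosSemidef)
    (Δ : (Fin ny → ℝ) → (Fin nu → ℝ)) (hΔmeas : Measurable Δ)
    (hquad : ∀ y : Fin ny → ℝ,
      0 ≤ Sum.elim y (Δ y) ⬝ᵥ (Pmat *ᵥ Sum.elim y (Δ y)))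
    {Ω : Type*} [MeasurableSpace Ω] (μ : Measure Ω) [IsProbabilityMeasure μ]
    (ψ : ℕ → Ω → Fin nψ → ℝ) (w : ℕ → Ω → Fin nw → ℝ)
    (hrec : ∀ t ω, ψ (t + 1) ω =
      A *ᵥ ψ t ω + σ • (Bw *ᵥ w t ω) + Bu *ᵥ Δ (Cy *ᵥ ψ t ω))
    (hψmeas : ∀ t, Measurable (ψ t)) (hwmeas : ∀ t, Measurable (w t))
    (hψint : ∀ t, Integrable (fun ω => ∑ i, (ψ t ω i) ^ 2) μ)
    (hwint : ∀ t, Integrable (fun ω => ∑ i, (w t ω i) ^ 2) μ)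
    (hmean : ∀ t, ∀ i : Fin nw, ∫ ω, w t ω i ∂μ = 0)
    (hcov : ∀ t, ∀ i j : Fin nw, ∫ ω, w t ω i * w t ω j ∂μ = if i = j then 1 else 0)
    (hindep : ∀ t, IndepFun (ψ t) (w t) μ) :
    limsup (fun T : ℕ =>
        (1 / (T : ℝ)) * ∑ t ∈ Finset.Icc 1 T, ∫ ω, ∑ i, ((Cz *ᵥ ψ t ω) i) ^ 2 ∂μ) atTop
      ≤ σ ^ 2 * (Bwᵀ * X * Bw).trace := by
  classical
  -- square root of X
  set M : Matrix (Fin nψ) (Fin nψ) ℝ := (open scoped MatrixOrder in CFC.sqrt X) with hMdef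
  have hM2 : M * M = X := by open scoped MatrixOrder in exact CFC.sqrt_mul_sqrt_self X hX.nonneg
  have hMt : Mᵀ = M := by
    have h := (show M.PosSemidef by open scoped MatrixOrder in exact (CFC.sqrt_nonneg X).posSemidef).1
    rwa [IsHermitian, conjTranspose_eq_transpose_of_trivial] at h
  have key : ∀ v : Fin nψ → ℝ, (M *ᵥ v) ⬝ᵥ (M *ᵥ v) = v ⬝ᵥ (X *ᵥ v) := by
    intro v
    conv_rhs => rw [← hM2, ← mulVec_mulVec, ← hMt, aux_dot_transpose, hMt]
  -- notation
  set K : Matrix (Fin nw) (Fin nw) ℝ := Bwᵀ * X * Bw with hKdef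
  set Kσ : ℝ := σ ^ 2 * K.trace with hKσ
  set sf : ℕ → Ω → Fin nψ → ℝ :=
    fun t ω => A *ᵥ ψ t ω + Bu *ᵥ Δ (Cy *ᵥ ψ t ω) with hsf
  set c : ℕ → ℝ := fun t => ∫ ω, ∑ i, ((Cz *ᵥ ψ t ω) i) ^ 2 ∂μ with hc
  set V : ℕ → ℝ := fun t => ∫ ω, ψ t ω ⬝ᵥ (X *ᵥ ψ t ω) ∂μ with hV
  -- measurability
  have hsfmap : Measurable fun p : Fin nψ → ℝ => A *ᵥ p + Bu *ᵥ Δ (Cy *ᵥ p) := by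
    apply measurable_pi_lambda
    intro i
    exact ((measurable_pi_apply i).comp (aux_measurable_mulVec A measurable_id)).add
      ((measurable_pi_apply i).comp
        (aux_measurable_mulVec Bu (hΔmeas.comp (aux_measurable_mulVec Cy measurable_id))))
  have hsfmeas : ∀ t, Measurable (sf t) := fun t => hsfmap.comp (hψmeas t)
  -- integrability of state quadratic form
  have hQint : ∀ t, Integrable (fun ω => ψ t ω ⬝ᵥ (X *ᵥ ψ t ω)) μ :=
    fun t => aux_integrable_quadform (hψmeas t) (hψint t) X
  have hQnn : ∀ t ω, 0 ≤ ψ t ω ⬝ᵥ (X *ᵥ ψ t ω) := by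
    intro t ω
    have := hX.dotProduct_mulVec_nonneg (ψ t ω); rwa [star_trivial] at this
  have hsQnn : ∀ t ω, 0 ≤ sf t ω ⬝ᵥ (X *ᵥ sf t ω) := by
    intro t ω
    have := hX.dotProduct_mulVec_nonneg (sf t ω); rwa [star_trivial] at this
  -- pointwise LMI inequality
  have hpt : ∀ t ω, (∑ i, ((Cz *ᵥ ψ t ω) i) ^ 2) + sf t ω ⬝ᵥ (X *ᵥ sf t ω)
      ≤ ψ t ω ⬝ᵥ (X *ᵥ ψ t ω) := by
    intro t ω
    rw [aux_sq_sum_eq_dot]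
    exact aux_lmi_pointwise lamb hlamb A Bu Cz Cy Pmat X hLMI (ψ t ω) (Δ (Cy *ᵥ ψ t ω))
      (hquad (Cy *ᵥ ψ t ω))
  -- integrability of Z
  have hZint : ∀ t, Integrable (fun ω => ∑ i, ((Cz *ᵥ ψ t ω) i) ^ 2) μ := by
    intro t
    have h : (fun ω => ∑ i, ((Cz *ᵥ ψ t ω) i) ^ 2)
        = fun ω => ψ t ω ⬝ᵥ ((Czᵀ * Cz) *ᵥ ψ t ω) := by
      funext ω
      rw [aux_sq_sum_eq_dot, ← mulVec_mulVec, aux_dot_transpose]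
    rw [h]
    exact aux_integrable_quadform (hψmeas t) (hψint t) _
  have hZnn : ∀ t ω, 0 ≤ ∑ i, ((Cz *ᵥ ψ t ω) i) ^ 2 :=
    fun t ω => Finset.sum_nonneg fun i _ => sq_nonneg _
  -- integrability of sQuad
  have hsQint : ∀ t, Integrable (fun ω => sf t ω ⬝ᵥ (X *ᵥ sf t ω)) μ := by
    intro t
    apply Integrable.mono' (hQint t) (aux_measurable_dot (hsfmeas t)
      (aux_measurable_mulVec X (hsfmeas t))).aestronglyMeasurable
    filter_upwards with ω
    rw [Real.norm_eq_abs, abs_of_nonneg (hsQnn t ω)]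
    have := hpt t ω
    have := hZnn t ω
    linarith
  -- Step A : c t + ∫ sQuad ≤ V t
  have hStepA : ∀ t, c t + (∫ ω, sf t ω ⬝ᵥ (X *ᵥ sf t ω) ∂μ) ≤ V t := by
    intro t
    rw [hc, hV, ← integral_add (hZint t) (hsQint t)]
    exact integral_mono ((hZint t).add (hsQint t)) (hQint t) fun ω => hpt t ω
  -- Step B : V (t+1) = ∫ sQuad + Kσ
  have hStepB : ∀ t, V (t + 1) = (∫ ω, sf t ω ⬝ᵥ (X *ᵥ sf t ω) ∂μ) + Kσ := by
    intro t
    set g : Ω → Fin nψ → ℝ := fun ω => M *ᵥ sf t ω with hg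
    set hN : Ω → Fin nψ → ℝ := fun ω => (M * Bw) *ᵥ w t ω with hhN
    have hgmeas : Measurable g := aux_measurable_mulVec M (hsfmeas t)
    have hhmeas : Measurable hN := aux_measurable_mulVec (M * Bw) (hwmeas t)
    have hgsq : ∀ ω, ∑ i, (g ω i) ^ 2 = sf t ω ⬝ᵥ (X *ᵥ sf t ω) := by
      intro ω; rw [aux_sq_sum_eq_dot]; exact key (sf t ω)
    have hgsqint : Integrable (fun ω => ∑ i, (g ω i) ^ 2) μ := by
      simpa only [hgsq] using hsQint t
    have hKfact : (M * Bw)ᵀ * (M * Bw) = K := by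
      rw [transpose_mul, hMt, Matrix.mul_assoc, ← Matrix.mul_assoc M M Bw, hM2,
        ← Matrix.mul_assoc]
    have hhh : ∀ ω, hN ω ⬝ᵥ hN ω = w t ω ⬝ᵥ (K *ᵥ w t ω) := by
      intro ω
      rw [← hKfact, ← mulVec_mulVec, aux_dot_transpose]
    have hhsq : ∀ ω, ∑ i, (hN ω i) ^ 2 = w t ω ⬝ᵥ (K *ᵥ w t ω) := by
      intro ω; rw [aux_sq_sum_eq_dot]; exact hhh ω
    have hwKint : Integrable (fun ω => w t ω ⬝ᵥ (K *ᵥ w t ω)) μ :=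
      aux_integrable_quadform (hwmeas t) (hwint t) K
    have hhsqint : Integrable (fun ω => ∑ i, (hN ω i) ^ 2) μ := by
      simpa only [hhsq] using hwKint
    have hgiint : ∀ i, Integrable (fun ω => g ω i) μ :=
      fun i => aux_integrable_coord hgmeas hgsqint i
    have hhiint : ∀ i, Integrable (fun ω => hN ω i) μ :=
      fun i => aux_integrable_coord hhmeas hhsqint i
    have hwiint : ∀ i, Integrable (fun ω => w t ω i) μ :=
      fun i => aux_integrable_coord (hwmeas t) (hwint t) i
    have hhzero : ∀ i, ∫ ω, hN ω i ∂μ = 0 := by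
      intro i
      have h1 : (fun ω => hN ω i) = fun ω => ∑ j, (M * Bw) i j * w t ω j := by
        funext ω; simp [hhN, mulVec, dotProduct]
      rw [h1, integral_finset_sum _ fun j _ => (hwiint j).const_mul _]
      simp [integral_const_mul, hmean t]
    have hindgh : ∀ i : Fin nψ, IndepFun (fun ω => g ω i) (fun ω => hN ω i) μ := by
      intro i
      exact (hindep t).comp
        ((measurable_pi_apply i).comp (aux_measurable_mulVec M hsfmap))
        ((measurable_pi_apply i).comp (aux_measurable_mulVec (M * Bw) measurable_id))
    have hghint : ∀ i : Fin nψ, Integrable (fun ω => g ω i * hN ω i) μ :=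
      fun i => (hindgh i).integrable_mul (hgiint i) (hhiint i)
    have hghzero : ∀ i : Fin nψ, ∫ ω, g ω i * hN ω i ∂μ = 0 := by
      intro i
      have h := (hindgh i).integral_fun_mul_eq_mul_integral (hgiint i).1 (hhiint i).1
      simp only [hhzero i, mul_zero] at h
      exact h
    -- expectation of the noise quadratic form
    have hwKval : ∫ ω, w t ω ⬝ᵥ (K *ᵥ w t ω) ∂μ = K.trace := by
      have h1 : (fun ω => w t ω ⬝ᵥ (K *ᵥ w t ω))
          = fun ω => ∑ i, ∑ j, K i j * (w t ω i * w t ω j) := by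
        funext ω; exact aux_dot_as_sum K (w t ω) (w t ω)
      rw [h1, integral_finset_sum _ (f := fun i ω => ∑ j, K i j * (w t ω i * w t ω j)) fun i _ => integrable_finset_sum _ fun j _ =>
        (aux_integrable_pair (hwmeas t) (hwint t) i j).const_mul _]
      have h2 : ∀ i : Fin nw, ∫ ω, ∑ j, K i j * (w t ω i * w t ω j) ∂μ = K i i := by
        intro i
        rw [integral_finset_sum _ fun j _ =>
          (aux_integrable_pair (hwmeas t) (hwint t) i j).const_mul _]
        have h3 : ∀ j, ∫ ω, K i j * (w t ω i * w t ω j) ∂μ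
            = if i = j then K i j else 0 := by
          intro j
          rw [integral_const_mul, hcov t i j]
          split <;> simp
        simp only [h3]
        simp
      simp only [h2]
      rfl
    -- pointwise decomposition
    have hdecomp : ∀ ω, ψ (t + 1) ω ⬝ᵥ (X *ᵥ ψ (t + 1) ω)
        = sf t ω ⬝ᵥ (X *ᵥ sf t ω) + (2 * σ) * (∑ i, g ω i * hN ω i)
          + σ ^ 2 * (w t ω ⬝ᵥ (K *ᵥ w t ω)) := by
      intro ω
      have hψ1 : ψ (t + 1) ω = sf t ω + σ • (Bw *ᵥ w t ω) := by
        rw [hrec t ω]; exact add_right_comm _ _ _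
      rw [← key, hψ1, mulVec_add, mulVec_smul, mulVec_mulVec]
      have hgh : (M *ᵥ sf t ω) = g ω := rfl
      rw [hgh]
      simp only [dotProduct_add, add_dotProduct, smul_dotProduct, dotProduct_smul,
        smul_eq_mul]
      have e1 : g ω ⬝ᵥ g ω = sf t ω ⬝ᵥ (X *ᵥ sf t ω) := key (sf t ω)
      have e2 : hN ω ⬝ᵥ hN ω = w t ω ⬝ᵥ (K *ᵥ w t ω) := hhh ω
      have e3 : hN ω ⬝ᵥ g ω = g ω ⬝ᵥ hN ω := dotProduct_comm _ _
      have e4 : g ω ⬝ᵥ hN ω = ∑ i, g ω i * hN ω i := rfl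
      rw [e1, e2, e3, e4]
      ring
    -- integrate
    have hcrossint : Integrable (fun ω => (2 * σ) * (∑ i, g ω i * hN ω i)) μ :=
      (integrable_finset_sum _ fun i _ => hghint i).const_mul _
    have hKint2 : Integrable (fun ω => σ ^ 2 * (w t ω ⬝ᵥ (K *ᵥ w t ω))) μ :=
      hwKint.const_mul _
    calc V (t + 1) = ∫ ω, (sf t ω ⬝ᵥ (X *ᵥ sf t ω) + (2 * σ) * (∑ i, g ω i * hN ω i)
          + σ ^ 2 * (w t ω ⬝ᵥ (K *ᵥ w t ω))) ∂μ := by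
            rw [hV]; exact integral_congr_ae (Filter.Eventually.of_forall hdecomp)
      _ = (∫ ω, sf t ω ⬝ᵥ (X *ᵥ sf t ω) ∂μ) + (∫ ω, (2 * σ) * (∑ i, g ω i * hN ω i) ∂μ)
          + ∫ ω, σ ^ 2 * (w t ω ⬝ᵥ (K *ᵥ w t ω)) ∂μ := by
            have h12 : Integrable (fun ω => sf t ω ⬝ᵥ (X *ᵥ sf t ω)
                + (2 * σ) * (∑ i, g ω i * hN ω i)) μ := (hsQint t).add hcrossint
            rw [integral_add h12 hKint2, integral_add (hsQint t) hcrossint]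
      _ = (∫ ω, sf t ω ⬝ᵥ (X *ᵥ sf t ω) ∂μ) + Kσ := by
            have hz : ∫ ω, (2 * σ) * (∑ i, g ω i * hN ω i) ∂μ = 0 := by
              rw [integral_const_mul, integral_finset_sum _ fun i _ => hghint i]
              simp [hghzero]
            rw [hz, integral_const_mul, hwKval, add_zero, hKσ]
  -- per-step inequality
  have hstep : ∀ t, c t + V (t + 1) ≤ V t + Kσ := by
    intro t
    have := hStepA t
    rw [hStepB t]
    linarith
  have hVnn : ∀ t, 0 ≤ V t := fun t => integral_nonneg fun ω => hQnn t ω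
  have hcnn : ∀ t, 0 ≤ c t := fun t => integral_nonneg fun ω => hZnn t ω
  -- telescoping
  have htele : ∀ T : ℕ, ∑ t ∈ Finset.Icc 1 T, c t ≤ V 1 - V (T + 1) + T * Kσ := by
    intro T
    induction T with
    | zero => simp
    | succ T ih =>
      rw [Finset.sum_Icc_succ_top (Nat.succ_le_succ (Nat.zero_le T))]
      have := hstep (T + 1)
      push_cast
      push_cast at ih
      linarith
  -- final bound
  have hub : ∀ T : ℕ, 1 ≤ T →
      (1 / (T : ℝ)) * ∑ t ∈ Finset.Icc 1 T, (∫ ω, ∑ i, ((Cz *ᵥ ψ t ω) i) ^ 2 ∂μ)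
        ≤ V 1 / (T : ℝ) + Kσ := by
    intro T hT
    have hTpos : (0 : ℝ) < T := by exact_mod_cast hT
    have hsum : ∑ t ∈ Finset.Icc 1 T, (∫ ω, ∑ i, ((Cz *ᵥ ψ t ω) i) ^ 2 ∂μ)
        ≤ V 1 + T * Kσ := by
      have h1 : ∑ t ∈ Finset.Icc 1 T, (∫ ω, ∑ i, ((Cz *ᵥ ψ t ω) i) ^ 2 ∂μ)
          = ∑ t ∈ Finset.Icc 1 T, c t := rfl
      rw [h1]
      have := htele T
      have := hVnn (T + 1)
      linarith
    calc (1 / (T : ℝ)) * ∑ t ∈ Finset.Icc 1 T, (∫ ω, ∑ i, ((Cz *ᵥ ψ t ω) i) ^ 2 ∂μ)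
        ≤ (1 / (T : ℝ)) * (V 1 + T * Kσ) := by
          apply mul_le_mul_of_nonneg_left hsum
          positivity
      _ = V 1 / (T : ℝ) + Kσ := by
          field_simp
  have hbdd : ∀ᶠ T : ℕ in atTop, (1 / (T : ℝ)) *
      ∑ t ∈ Finset.Icc 1 T, (∫ ω, ∑ i, ((Cz *ᵥ ψ t ω) i) ^ 2 ∂μ)
        ≤ V 1 / (T : ℝ) + Kσ :=
    eventually_atTop.2 ⟨1, hub⟩
  have htend : Tendsto (fun T : ℕ => V 1 / (T : ℝ) + Kσ) atTop (nhds (0 + Kσ)) :=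
    (tendsto_const_div_atTop_nhds_zero_nat (V 1)).add tendsto_const_nhds
  have hco : IsCoboundedUnder (· ≤ ·) atTop (fun T : ℕ => (1 / (T : ℝ)) *
      ∑ t ∈ Finset.Icc 1 T, (∫ ω, ∑ i, ((Cz *ᵥ ψ t ω) i) ^ 2 ∂μ)) := by
    apply isCoboundedUnder_le_of_le atTop (x := 0)
    intro T
    apply mul_nonneg
    · positivity
    · exact Finset.sum_nonneg fun t _ => hcnn t
  have hbd : IsBoundedUnder (· ≤ ·) atTop (fun T : ℕ => V 1 / (T : ℝ) + Kσ) :=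
    htend.isBoundedUnder_le
  calc limsup (fun T : ℕ =>
        (1 / (T : ℝ)) * ∑ t ∈ Finset.Icc 1 T, ∫ ω, ∑ i, ((Cz *ᵥ ψ t ω) i) ^ 2 ∂μ) atTop
      ≤ limsup (fun T : ℕ => V 1 / (T : ℝ) + Kσ) atTop := limsup_le_limsup hbdd hco hbd
    _ = 0 + Kσ := htend.limsup_eq
    _ = σ ^ 2 * K.trace := by rw [zero_add, hKσ]
end

section
/- For gradient descent with α = 1/L, the supremum over all f ∈ F_m^L of the steady-state variance amplification J (with σ=1) of the iterate error x^t - x* equals q_gd = nκ²/(2κ-1), where κ = L/m; in particular the quadratic f(x) = (m/2)‖x‖² attains this supremum. -/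
open MeasureTheory ProbabilityTheory Filter InnerProductSpace Set

section ConvexAux

open InnerProductSpace Set

variable {E : Type*} [NormedAddCommGroup E] [InnerProductSpace ℝ E] [CompleteSpace E]

local notation "⟪" x ", " y "⟫" => @inner ℝ _ _ x y

/-- derivative of `t ↦ φ (x + t • d)`. -/
lemma hasDerivAt_comp_line {φ : E → ℝ} (hφ : Differentiable ℝ φ) (x d : E) (t : ℝ) :
    HasDerivAt (fun s : ℝ => φ (x + s • d)) ⟪gradient φ (x + t • d), d⟫ t := by
  have h1 : HasDerivAt (fun s : ℝ => x + s • d) d t := by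
    simpa using ((hasDerivAt_id t).smul_const d).const_add x
  have h2 := ((hφ (x + t • d)).hasGradientAt.hasFDerivAt).comp_hasDerivAt t h1
  simpa [InnerProductSpace.toDual_apply_apply, Function.comp_def] using h2

/-- first-order condition for convexity. -/
lemma convex_first_order {φ : E → ℝ} (hφ : Differentiable ℝ φ)
    (hc : ConvexOn ℝ univ φ) (x y : E) :
    φ x + ⟪gradient φ x, y - x⟫ ≤ φ y := by
  have hg : ConvexOn ℝ univ (fun s : ℝ => φ (x + s • (y - x))) := by
    have h := hc.comp_affineMap (AffineMap.lineMap x y : ℝ →ᵃ[ℝ] E)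
    simp only [Set.preimage_univ] at h
    have he : (fun s : ℝ => φ (x + s • (y - x))) = φ ∘ (AffineMap.lineMap x y) := by
      funext s
      show φ _ = φ _
      congr 1
      simp [AffineMap.lineMap_apply]
      module
    rw [he]; exact h
  have hd := hasDerivAt_comp_line hφ x (y - x) 0
  simp only [zero_smul, add_zero] at hd
  have := hg.le_slope_of_hasDerivAt (Set.mem_univ (0:ℝ)) (Set.mem_univ (1:ℝ)) one_pos hd
  rw [slope_def_field] at this
  simp only [zero_smul, add_zero, one_smul, add_sub_cancel, sub_zero, div_one] at this
  linarith


/-- descent lemma under one-sided curvature bound. -/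
lemma descent_lemma {φ : E → ℝ} (hφ : Differentiable ℝ φ) {ℓ : ℝ} (hℓ : 0 ≤ ℓ)
    (hub : ∀ z w : E, ⟪gradient φ z - gradient φ w, z - w⟫ ≤ ℓ * ‖z - w‖ ^ 2) (x y : E) :
    φ y ≤ φ x + ⟪gradient φ x, y - x⟫ + ℓ / 2 * ‖y - x‖ ^ 2 := by
  set d := y - x with hd
  set g : ℝ → ℝ := fun s => φ (x + s • d) with hgdef
  set h : ℝ → ℝ := fun s => g s - s * ⟪gradient φ x, d⟫ - ℓ * ‖d‖ ^ 2 * s ^ 2 / 2 with hhdef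
  have hderiv : ∀ t : ℝ, HasDerivAt h
      (⟪gradient φ (x + t • d), d⟫ - ⟪gradient φ x, d⟫ - ℓ * ‖d‖ ^ 2 * t) t := by
    intro t
    have h1 := hasDerivAt_comp_line hφ x d t
    have h2 : HasDerivAt (fun s : ℝ => s * ⟪gradient φ x, d⟫) ⟪gradient φ x, d⟫ t := by
      simpa using (hasDerivAt_id t).mul_const ⟪gradient φ x, d⟫
    have h3 : HasDerivAt (fun s : ℝ => ℓ * ‖d‖ ^ 2 * s ^ 2 / 2) (ℓ * ‖d‖ ^ 2 * t) t := by
      have := ((hasDerivAt_pow 2 t).const_mul (ℓ * ‖d‖ ^ 2)).div_const 2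
      exact this.congr_deriv (by push_cast; ring)
    exact (h1.sub h2).sub h3
  have hmono : h 1 ≤ h 0 := by
    have hcont : ContinuousOn h (Set.Icc 0 1) :=
      fun t _ => ((hderiv t).continuousAt).continuousWithinAt
    have hanti : AntitoneOn h (Set.Icc (0:ℝ) 1) := by
      apply antitoneOn_of_deriv_nonpos (convex_Icc 0 1) hcont
      · intro t ht
        exact ((hderiv t).differentiableAt).differentiableWithinAt
      · intro t ht
        rw [interior_Icc] at ht
        rw [(hderiv t).deriv]
        have := hub (x + t • d) x
        have hz : (x + t • d) - x = t • d := by abel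
        rw [hz] at this
        rw [inner_smul_right, norm_smul] at this
        simp only [Real.norm_eq_abs] at this
        have ht0 : 0 < t := ht.1
        have habs : |t| = t := abs_of_pos ht0
        rw [habs] at this
        have h4 : ⟪gradient φ (x + t • d) - gradient φ x, d⟫ ≤ ℓ * ‖d‖ ^ 2 * t := by
          nlinarith
        rw [inner_sub_left] at h4
        linarith
    exact hanti (Set.mem_Icc.2 ⟨le_refl 0, zero_le_one⟩) (Set.mem_Icc.2 ⟨zero_le_one, le_refl 1⟩)
      zero_le_one
  have hg0 : g 0 = φ x := by simp [hgdef]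
  have hg1 : g 1 = φ y := by simp [hgdef, hd]
  simp only [hhdef, hg0, hg1, one_mul, one_pow, mul_one, zero_mul, zero_pow, mul_zero,
    sub_zero, zero_sub] at hmono
  norm_num at hmono
  rw [inner_gradient_left]
  linarith

/-- cocoercivity. -/
lemma cocoercivity {φ : E → ℝ} (hφ : Differentiable ℝ φ) (hc : ConvexOn ℝ univ φ)
    {ℓ : ℝ} (hℓ : 0 ≤ ℓ)
    (hub : ∀ z w : E, ⟪gradient φ z - gradient φ w, z - w⟫ ≤ ℓ * ‖z - w‖ ^ 2) (x y : E) :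
    ‖gradient φ y - gradient φ x‖ ^ 2 ≤ ℓ * ⟪gradient φ y - gradient φ x, y - x⟫ := by
  rcases eq_or_lt_of_le hℓ with hℓ0 | hℓpos
  · -- ℓ = 0 : gradient is constant
    have hlin : ∀ a b : E, φ b = φ a + ⟪gradient φ a, b - a⟫ := by
      intro a b
      have h1 := convex_first_order hφ hc a b
      have h2 := descent_lemma hφ hℓ hub a b
      rw [← hℓ0] at h2
      norm_num at h2
      rw [inner_gradient_left, map_sub] at h1 ⊢
      linarith
    have hconst : ∀ a : E, gradient φ a = gradient φ 0 := by
      intro a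
      have key : ∀ b : E, ⟪gradient φ a - gradient φ 0, b - a⟫ = 0 := by
        intro b
        have h1 := hlin a b
        have h2 := hlin 0 b
        have h3 := hlin 0 a
        rw [inner_sub_left]
        have : ⟪gradient φ 0, b - a⟫ = ⟪gradient φ 0, b - 0⟫ - ⟪gradient φ 0, a - 0⟫ := by
          rw [← inner_sub_right]; congr 1; abel
        linarith [this, h1, h2, h3]
      have := key (a + (gradient φ a - gradient φ 0))
      simp only [add_sub_cancel_left] at this
      have := inner_self_eq_zero.mp this
      exact sub_eq_zero.mp this
    rw [hconst x, hconst y]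
    simp
  · -- ℓ > 0
    have key : ∀ a b : E, ℓ⁻¹ / 2 * ‖gradient φ b - gradient φ a‖ ^ 2
        ≤ φ b - φ a - ⟪gradient φ a, b - a⟫ := by
      intro a b
      set g := gradient φ b - gradient φ a with hgd
      set z := b - (ℓ⁻¹) • g with hz
      have h1 := convex_first_order hφ hc a z
      have h2 := descent_lemma hφ hℓ hub b z
      have hzy : z - b = -(ℓ⁻¹ • g) := by rw [hz]; abel
      have hzx : z - a = (b - a) - ℓ⁻¹ • g := by rw [hz]; abel
      rw [hzy] at h2
      rw [hzx] at h1
      have e1 : ⟪gradient φ a, (b - a) - ℓ⁻¹ • g⟫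
          = ⟪gradient φ a, b - a⟫ - ℓ⁻¹ * ⟪gradient φ a, g⟫ := by
        rw [inner_sub_right, inner_smul_right]
      have e2 : ⟪gradient φ b, -(ℓ⁻¹ • g)⟫ = -(ℓ⁻¹ * ⟪gradient φ b, g⟫) := by
        rw [inner_neg_right, inner_smul_right]
      have e3 : ‖-(ℓ⁻¹ • g)‖ ^ 2 = ℓ⁻¹ ^ 2 * ‖g‖ ^ 2 := by
        rw [norm_neg, norm_smul, Real.norm_eq_abs, abs_of_nonneg (inv_nonneg.mpr hℓ), mul_pow]
      have e4 : ⟪gradient φ b, g⟫ - ⟪gradient φ a, g⟫ = ‖g‖ ^ 2 := by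
        rw [← inner_sub_left, ← hgd, real_inner_self_eq_norm_sq]
      rw [e1] at h1
      rw [e2, e3] at h2
      have hlpos : (0:ℝ) < ℓ⁻¹ := inv_pos.mpr hℓpos
      have e5 : ℓ / 2 * (ℓ⁻¹ ^ 2 * ‖g‖ ^ 2) = ℓ⁻¹ / 2 * ‖g‖ ^ 2 := by
        field_simp
      nlinarith [h1, h2, e4, e5]
    have k1 := key x y
    have k2 := key y x
    have hsum : ⟪gradient φ y, x - y⟫ + ⟪gradient φ x, y - x⟫
        = -⟪gradient φ y - gradient φ x, y - x⟫ := by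
      rw [inner_sub_left]
      have : ⟪gradient φ y, x - y⟫ = -⟪gradient φ y, y - x⟫ := by
        rw [← inner_neg_right]; congr 1; abel
      linarith [this]
    have hnn : ‖gradient φ x - gradient φ y‖ = ‖gradient φ y - gradient φ x‖ := by
      rw [← norm_neg]; congr 1; abel
    rw [hnn] at k2
    have hlpos : (0:ℝ) < ℓ⁻¹ := inv_pos.mpr hℓpos
    have hfin : ℓ⁻¹ * ‖gradient φ y - gradient φ x‖ ^ 2
        ≤ ⟪gradient φ y - gradient φ x, y - x⟫ := by linarith [k1, k2, hsum]
    calc ‖gradient φ y - gradient φ x‖ ^ 2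
        = ℓ * (ℓ⁻¹ * ‖gradient φ y - gradient φ x‖ ^ 2) := by
          field_simp
      _ ≤ ℓ * ⟪gradient φ y - gradient φ x, y - x⟫ :=
          mul_le_mul_of_nonneg_left hfin hℓ

lemma gradient_sub_norm_sq {f : E → ℝ} (hdf : Differentiable ℝ f) (m : ℝ) (z : E) :
    gradient (fun x => f x - m / 2 * ‖x‖ ^ 2) z = gradient f z - m • z := by
  apply HasGradientAt.gradient
  rw [hasGradientAt_iff_hasFDerivAt]
  have h1 : HasFDerivAt f (toDual ℝ E (gradient f z)) z := (hdf z).hasGradientAt.hasFDerivAt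
  have h2 : HasFDerivAt (fun x : E => ‖x‖ ^ 2) (2 • (innerSL ℝ z)) z := by
    simpa using (hasFDerivAt_id z).norm_sq
  have h3 := h1.sub ((h2.const_mul (m / 2)))
  refine h3.congr_fderiv ?_
  ext v
  simp [InnerProductSpace.toDual_apply_apply, inner_sub_left, real_inner_smul_left]
  ring

lemma contraction_sq {f : E → ℝ} {m L : ℝ} (hm : 0 < m) (hmL : m ≤ L)
    (hdf : Differentiable ℝ f) (hsc : StrongConvexOn univ m f)
    (hlip : LipschitzWith (Real.toNNReal L) (gradient f)) {xstar : E}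
    (hstar : gradient f xstar = 0) (x : E) :
    ‖x - (1 / L) • gradient f x - xstar‖ ^ 2 ≤ (1 - m / L) ^ 2 * ‖x - xstar‖ ^ 2 := by
  have hL : (0:ℝ) < L := lt_of_lt_of_le hm hmL
  set φ : E → ℝ := fun x => f x - m / 2 * ‖x‖ ^ 2 with hφdef
  have hφdiff : Differentiable ℝ φ := by
    apply hdf.sub
    intro z
    have h2 : HasFDerivAt (fun x : E => ‖x‖ ^ 2) (2 • (innerSL ℝ z)) z := by
      simpa using (hasFDerivAt_id z).norm_sq
    exact ((h2.const_mul (m / 2))).differentiableAt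
  have hgradφ : ∀ z, gradient φ z = gradient f z - m • z :=
    fun z => gradient_sub_norm_sq hdf m z
  have hconv : ConvexOn ℝ univ φ := strongConvexOn_iff_convex.mp hsc
  have hlip' : ∀ z w : E, ‖gradient f z - gradient f w‖ ≤ L * ‖z - w‖ := by
    intro z w
    have := hlip.dist_le_mul z w
    rwa [dist_eq_norm, dist_eq_norm, Real.coe_toNNReal L hL.le] at this
  have hub : ∀ z w : E, ⟪gradient φ z - gradient φ w, z - w⟫ ≤ (L - m) * ‖z - w‖ ^ 2 := by
    intro z w
    rw [hgradφ, hgradφ]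
    have e1 : gradient f z - m • z - (gradient f w - m • w)
        = (gradient f z - gradient f w) - m • (z - w) := by module
    rw [e1, inner_sub_left, real_inner_smul_left, real_inner_self_eq_norm_sq]
    have h4 : ⟪gradient f z - gradient f w, z - w⟫ ≤ L * ‖z - w‖ ^ 2 := by
      calc ⟪gradient f z - gradient f w, z - w⟫ ≤ ‖gradient f z - gradient f w‖ * ‖z - w‖ :=
            real_inner_le_norm _ _
        _ ≤ (L * ‖z - w‖) * ‖z - w‖ := by
            apply mul_le_mul_of_nonneg_right (hlip' z w) (norm_nonneg _)
        _ = L * ‖z - w‖ ^ 2 := by ring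
    nlinarith [h4]
  have hco := cocoercivity hφdiff hconv (by linarith : (0:ℝ) ≤ L - m) hub xstar x
  set δ := x - xstar with hδ
  set h := gradient f x - m • δ with hh
  have hφx : gradient φ x - gradient φ xstar = h := by
    rw [hgradφ, hgradφ, hstar, hh, hδ]; module
  rw [hφx] at hco
  -- hco : ‖h‖ ^ 2 ≤ (L - m) * ⟪h, δ⟫
  have e2 : x - (1 / L) • gradient f x - xstar = (1 - m / L) • δ - (1 / L) • h := by
    rw [hh, hδ]
    module
  rw [e2]
  rw [norm_sub_sq_real]
  have e3 : ‖(1 - m / L) • δ‖ ^ 2 = (1 - m / L) ^ 2 * ‖δ‖ ^ 2 := by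
    rw [norm_smul, Real.norm_eq_abs, mul_pow, sq_abs]
  have e4 : ⟪(1 - m / L) • δ, (1 / L) • h⟫ = (1 - m / L) * (1 / L) * ⟪h, δ⟫ := by
    rw [real_inner_smul_left, real_inner_smul_right, real_inner_comm]
    ring
  have e5 : ‖(1 / L) • h‖ ^ 2 = (1 / L) ^ 2 * ‖h‖ ^ 2 := by
    rw [norm_smul, Real.norm_eq_abs, mul_pow, sq_abs]
  rw [e3, e4, e5]
  have hip : (0:ℝ) ≤ (L - m) * ⟪h, δ⟫ := le_trans (sq_nonneg _) hco
  have hL0 : L ≠ 0 := ne_of_gt hL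
  have h7 : ‖h‖ ^ 2 ≤ 2 * ((L - m) * ⟪h, δ⟫) := by linarith
  have key : (1 / L) ^ 2 * ‖h‖ ^ 2 ≤ 2 * ((1 - m / L) * (1 / L)) * ⟪h, δ⟫ := by
    calc (1 / L) ^ 2 * ‖h‖ ^ 2 ≤ (1 / L) ^ 2 * (2 * ((L - m) * ⟪h, δ⟫)) :=
          mul_le_mul_of_nonneg_left h7 (by positivity)
      _ = 2 * ((1 - m / L) * (1 / L)) * ⟪h, δ⟫ := by field_simp
  linarith [key]

end ConvexAux

section ProbAux

open MeasureTheory ProbabilityTheory Filter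

local notation "⟪" x ", " y "⟫" => @inner ℝ _ _ x y

lemma coord_abs_le {n : ℕ} (x : EuclideanSpace ℝ (Fin n)) (i : Fin n) : |x i| ≤ ‖x‖ := by
  have h1 : ⟪EuclideanSpace.single i (1:ℝ), x⟫ = x i := by
    rw [EuclideanSpace.inner_single_left]
    simp
  calc |x i| = |⟪EuclideanSpace.single i (1:ℝ), x⟫| := by rw [h1]
    _ ≤ ‖EuclideanSpace.single i (1:ℝ)‖ * ‖x‖ := abs_real_inner_le_norm _ _
    _ = ‖x‖ := by rw [EuclideanSpace.norm_single]; simp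

lemma sq_integrable_to_integrable {Ω : Type} [MeasurableSpace Ω] {μ : Measure Ω}
    [IsProbabilityMeasure μ] {n : ℕ} {U : Ω → EuclideanSpace ℝ (Fin n)}
    (hU : Measurable U) (hUi : Integrable (fun ω => ‖U ω‖ ^ 2) μ) : Integrable U μ := by
  refine Integrable.mono' ((integrable_const (1:ℝ)).add hUi) hU.aestronglyMeasurable ?_
  filter_upwards with ω
  have := norm_nonneg (U ω)
  simp only [Pi.add_apply]
  nlinarith [norm_nonneg (U ω)]

lemma expand_sq {n : ℕ} {Ω : Type} [MeasurableSpace Ω] {μ : Measure Ω} [IsProbabilityMeasure μ]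
    (U W : Ω → EuclideanSpace ℝ (Fin n)) (hU : Measurable U) (hW : Measurable W)
    (hUi : Integrable (fun ω => ‖U ω‖ ^ 2) μ) (hWi : Integrable (fun ω => ‖W ω‖ ^ 2) μ)
    (hmean : ∫ ω, W ω ∂μ = 0)
    (hcov : ∀ i j : Fin n, ∫ ω, W ω i * W ω j ∂μ = if i = j then 1 else 0)
    (hind : IndepFun U W μ) :
    ∫ ω, ‖U ω + W ω‖ ^ 2 ∂μ = (∫ ω, ‖U ω‖ ^ 2 ∂μ) + n := by
  have hU1 : Integrable U μ := sq_integrable_to_integrable hU hUi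
  have hW1 : Integrable W μ := sq_integrable_to_integrable hW hWi
  have hUm : ∀ i : Fin n, Measurable (fun ω => U ω i) := fun i => (measurable_pi_apply i).comp ((WithLp.measurable_ofLp _ _).comp hU)
  have hWm : ∀ i : Fin n, Measurable (fun ω => W ω i) := fun i => (measurable_pi_apply i).comp ((WithLp.measurable_ofLp _ _).comp hW)
  have hUic : ∀ i : Fin n, Integrable (fun ω => U ω i) μ := by
    intro i
    refine Integrable.mono' hU1.norm (hUm i).aestronglyMeasurable ?_
    filter_upwards with ω
    simpa [Real.norm_eq_abs] using coord_abs_le (U ω) i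
  have hWic : ∀ i : Fin n, Integrable (fun ω => W ω i) μ := by
    intro i
    refine Integrable.mono' hW1.norm (hWm i).aestronglyMeasurable ?_
    filter_upwards with ω
    simpa [Real.norm_eq_abs] using coord_abs_le (W ω) i
  have hindc : ∀ i : Fin n, IndepFun (fun ω => U ω i) (fun ω => W ω i) μ :=
    fun i => hind.comp ((measurable_pi_apply i).comp (WithLp.measurable_ofLp _ _)) ((measurable_pi_apply i).comp (WithLp.measurable_ofLp _ _))
  have hprod : ∀ i : Fin n, Integrable (fun ω => U ω i * W ω i) μ := fun i =>
    ((hindc i).integrable_mul (hUic i) (hWic i))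
  have hWmean : ∀ i : Fin n, ∫ ω, W ω i ∂μ = 0 := by
    intro i
    have h := (EuclideanSpace.proj (𝕜 := ℝ) i).integral_comp_comm hW1
    rw [hmean] at h
    simpa using h
  have hinner_eq : ∀ ω, ⟪U ω, W ω⟫ = ∑ i : Fin n, U ω i * W ω i := by
    intro ω
    simp [PiLp.inner_apply, RCLike.inner_apply, conj_trivial]
    exact Finset.sum_congr rfl (fun i _ => mul_comm _ _)
  have hinner_int : Integrable (fun ω => ⟪U ω, W ω⟫) μ := by
    have : Integrable (fun ω => ∑ i : Fin n, U ω i * W ω i) μ :=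
      integrable_finset_sum _ (fun i _ => hprod i)
    exact this.congr (by filter_upwards with ω using (hinner_eq ω).symm)
  have hcross : ∫ ω, ⟪U ω, W ω⟫ ∂μ = 0 := by
    rw [integral_congr_ae (by filter_upwards with ω using hinner_eq ω)]
    rw [integral_finset_sum _ (fun i _ => hprod i)]
    apply Finset.sum_eq_zero
    intro i _
    have h := (hindc i).integral_mul_eq_mul_integral (hUic i).aestronglyMeasurable (hWic i).aestronglyMeasurable
    rw [Pi.mul_def] at h
    rw [h, hWmean i, mul_zero]
  have hWsq : ∫ ω, ‖W ω‖ ^ 2 ∂μ = n := by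
    have hsq : ∀ ω, ‖W ω‖ ^ 2 = ∑ i : Fin n, W ω i * W ω i := by
      intro ω
      rw [← real_inner_self_eq_norm_sq, PiLp.inner_apply]
      simp [RCLike.inner_apply, conj_trivial, sq]
    have hWsqi : ∀ i : Fin n, Integrable (fun ω => W ω i * W ω i) μ := by
      intro i
      refine Integrable.mono' hWi ((hWm i).mul (hWm i)).aestronglyMeasurable ?_
      filter_upwards with ω
      have h1 := coord_abs_le (W ω) i
      rw [Real.norm_eq_abs, abs_mul]
      calc |W ω i| * |W ω i| ≤ ‖W ω‖ * ‖W ω‖ := mul_self_le_mul_self (abs_nonneg _) h1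
        _ = ‖W ω‖ ^ 2 := (pow_two _).symm
    rw [integral_congr_ae (by filter_upwards with ω using hsq ω)]
    rw [integral_finset_sum _ (fun i _ => hWsqi i)]
    simp [hcov]
  have hexp : ∀ ω, ‖U ω + W ω‖ ^ 2 = ‖U ω‖ ^ 2 + 2 * ⟪U ω, W ω⟫ + ‖W ω‖ ^ 2 :=
    fun ω => norm_add_sq_real _ _
  have h2i : Integrable (fun a => 2 * ⟪U a, W a⟫) μ := hinner_int.const_mul 2
  have hfg : Integrable (fun a => ‖U a‖ ^ 2 + 2 * ⟪U a, W a⟫) μ := hUi.add h2i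
  rw [integral_congr_ae (by filter_upwards with ω using hexp ω)]
  rw [integral_add hfg hWi, integral_add hUi h2i, integral_const_mul, hcross, hWsq]
  ring

end ProbAux

section AnalysisAux

open MeasureTheory ProbabilityTheory Filter

lemma cesaro_shift {a : ℕ → ℝ} {l : ℝ} (h : Tendsto a atTop (nhds l)) :
    Tendsto (fun t : ℕ => (1 / (t : ℝ)) * ∑ k ∈ Finset.range (t + 1), a k) atTop (nhds l) := by
  have h1 := h.cesaro
  have h2 : Tendsto (fun t : ℕ => ((t + 1 : ℕ) : ℝ)⁻¹ • ∑ i ∈ Finset.range (t + 1), a i)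
      atTop (nhds l) := h1.comp (tendsto_add_atTop_nat 1)
  have h3 : Tendsto (fun t : ℕ => (1 + 1 / (t : ℝ))) atTop (nhds 1) := by
    have := tendsto_const_nhds (x := (1:ℝ)) (f := atTop (α := ℕ))
    simpa using this.add tendsto_one_div_atTop_nhds_zero_nat
  have h4 := h3.mul h2
  rw [one_mul] at h4
  apply h4.congr'
  filter_upwards [eventually_ge_atTop 1] with t ht
  have ht0 : (t : ℝ) ≠ 0 := Nat.cast_ne_zero.mpr (by omega)
  have ht1 : ((t : ℝ) + 1) ≠ 0 := by positivity
  rw [smul_eq_mul]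
  push_cast
  field_simp

lemma limsup_avg_le (a : ℕ → ℝ) (c ν : ℝ) (hc0 : 0 ≤ c) (hc1 : c < 1) (h0 : ∀ k, 0 ≤ a k)
    (hrec : ∀ k, a (k + 1) ≤ c * a k + ν) :
    limsup (fun t : ℕ => (1 / (t : ℝ)) * ∑ k ∈ Finset.range (t + 1), a k) atTop
      ≤ ν / (1 - c) := by
  have hc1' : (0:ℝ) < 1 - c := by linarith
  set S := ν / (1 - c) with hSdef
  have hSrec : c * S + ν = S := by
    rw [hSdef]
    field_simp
    ring
  set B := max (a 0 - S) 0 with hBdef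
  have hbound : ∀ k, a k ≤ S + c ^ k * B := by
    intro k
    induction k with
    | zero =>
      have := le_max_left (a 0 - S) 0
      simp only [pow_zero, one_mul]
      linarith
    | succ k ih =>
      have h1 := hrec k
      have h2 : c * a k ≤ c * (S + c ^ k * B) := mul_le_mul_of_nonneg_left ih hc0
      have h3 : c * (S + c ^ k * B) + ν = (c * S + ν) + c ^ (k + 1) * B := by ring
      rw [hSrec] at h3
      linarith
  have htend : Tendsto (fun k : ℕ => S + c ^ k * B) atTop (nhds S) := by
    have := (tendsto_pow_atTop_nhds_zero_of_lt_one hc0 hc1).mul_const B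
    simpa using tendsto_const_nhds.add this
  have hces := cesaro_shift htend
  have hle : ∀ t : ℕ, (1 / (t : ℝ)) * ∑ k ∈ Finset.range (t + 1), a k
      ≤ (1 / (t : ℝ)) * ∑ k ∈ Finset.range (t + 1), (S + c ^ k * B) := by
    intro t
    apply mul_le_mul_of_nonneg_left (Finset.sum_le_sum fun k _ => hbound k) (by positivity)
  have hcob : IsCoboundedUnder (· ≤ ·) atTop
      (fun t : ℕ => (1 / (t : ℝ)) * ∑ k ∈ Finset.range (t + 1), a k) := by
    apply isCoboundedUnder_le_of_le atTop (x := 0)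
    intro t
    apply mul_nonneg (by positivity) (Finset.sum_nonneg fun k _ => h0 k)
  calc limsup (fun t : ℕ => (1 / (t : ℝ)) * ∑ k ∈ Finset.range (t + 1), a k) atTop
      ≤ limsup (fun t : ℕ => (1 / (t : ℝ)) * ∑ k ∈ Finset.range (t + 1), (S + c ^ k * B)) atTop :=
        limsup_le_limsup (Eventually.of_forall hle) hcob hces.isBoundedUnder_le
    _ = S := hces.limsup_eq

lemma limsup_avg_eq (a : ℕ → ℝ) (c ν : ℝ) (hc0 : 0 ≤ c) (hc1 : c < 1)
    (hrec : ∀ k, a (k + 1) = c * a k + ν) :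
    limsup (fun t : ℕ => (1 / (t : ℝ)) * ∑ k ∈ Finset.range (t + 1), a k) atTop
      = ν / (1 - c) := by
  have hc1' : (0:ℝ) < 1 - c := by linarith
  set S := ν / (1 - c) with hSdef
  have hSrec : c * S + ν = S := by
    rw [hSdef]; field_simp; ring
  have hsol : ∀ k, a k = S + c ^ k * (a 0 - S) := by
    intro k
    induction k with
    | zero => simp
    | succ k ih =>
      rw [hrec k, ih]
      have h3 : c * (S + c ^ k * (a 0 - S)) + ν = (c * S + ν) + c ^ (k + 1) * (a 0 - S) := by ring
      rw [h3, hSrec]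
  have htend : Tendsto a atTop (nhds S) := by
    have h := (tendsto_pow_atTop_nhds_zero_of_lt_one hc0 hc1).mul_const (a 0 - S)
    have h2 : Tendsto (fun k : ℕ => S + c ^ k * (a 0 - S)) atTop (nhds S) := by
      simpa using tendsto_const_nhds.add h
    exact h2.congr fun k => (hsol k).symm
  exact (cesaro_shift htend).limsup_eq

end AnalysisAux

/-- For gradient descent with `α = 1/L` and `σ = 1`, the supremum over
`f ∈ F_m^L` of the steady-state variance amplification
`J = limsup_t (1/t) Σ_{k=0}^t E‖x^k - x*‖²` equals `q_gd = nκ²/(2κ-1)`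
(`κ = L/m`): every `f ∈ F_m^L` and every admissible noisy process satisfies
`J ≤ q_gd`, and the quadratic `f(x) = (m/2)‖x‖²` attains this value. -/
theorem stmt_14 (n : ℕ) (hn : 0 < n) (m L : ℝ) (hm : 0 < m) (hmL : m ≤ L) :
    -- upper bound for all f in F_m^L
    (∀ (f : EuclideanSpace ℝ (Fin n) → ℝ) (xstar : EuclideanSpace ℝ (Fin n)),
      Differentiable ℝ f → StrongConvexOn Set.univ m f →
      LipschitzWith (Real.toNNReal L) (gradient f) → gradient f xstar = 0 →
      ∀ (Ω : Type) (_ : MeasurableSpace Ω) (μ : Measure Ω), IsProbabilityMeasure μ →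
      ∀ (x w : ℕ → Ω → EuclideanSpace ℝ (Fin n)),
        (∀ t ω, x (t + 1) ω = x t ω - (1 / L) • gradient f (x t ω) + w t ω) →
        (∀ t, Measurable (x t)) → (∀ t, Measurable (w t)) →
        (∀ t, Integrable (fun ω => ‖x t ω - xstar‖ ^ 2) μ) →
        (∀ t, Integrable (fun ω => ‖w t ω‖ ^ 2) μ) →
        (∀ t, ∫ ω, w t ω ∂μ = 0) →
        (∀ t, ∀ i j : Fin n, ∫ ω, (w t ω) i * (w t ω) j ∂μ = if i = j then 1 else 0) →
        (∀ t, IndepFun (x t) (w t) μ) →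
        limsup (fun t : ℕ =>
            (1 / (t : ℝ)) * ∑ k ∈ Finset.range (t + 1), ∫ ω, ‖x k ω - xstar‖ ^ 2 ∂μ) atTop
          ≤ n * (L / m) ^ 2 / (2 * (L / m) - 1)) ∧
    -- the quadratic f(x) = (m/2)‖x‖² (whose minimizer is x* = 0) attains the supremum
    (∀ (Ω : Type) (_ : MeasurableSpace Ω) (μ : Measure Ω), IsProbabilityMeasure μ →
      ∀ (x w : ℕ → Ω → EuclideanSpace ℝ (Fin n)),
        (∀ t ω, x (t + 1) ω = x t ω - (1 / L) • (m • x t ω) + w t ω) →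
        (∀ t, Measurable (x t)) → (∀ t, Measurable (w t)) →
        (∀ t, Integrable (fun ω => ‖x t ω‖ ^ 2) μ) →
        (∀ t, Integrable (fun ω => ‖w t ω‖ ^ 2) μ) →
        (∀ t, ∫ ω, w t ω ∂μ = 0) →
        (∀ t, ∀ i j : Fin n, ∫ ω, (w t ω) i * (w t ω) j ∂μ = if i = j then 1 else 0) →
        (∀ t, IndepFun (x t) (w t) μ) →
        limsup (fun t : ℕ =>
            (1 / (t : ℝ)) * ∑ k ∈ Finset.range (t + 1), ∫ ω, ‖x k ω‖ ^ 2 ∂μ) atTop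
          = n * (L / m) ^ 2 / (2 * (L / m) - 1)) := by
  classical
  have hL : (0:ℝ) < L := lt_of_lt_of_le hm hmL
  have hL0 : L ≠ 0 := ne_of_gt hL
  have hm0 : m ≠ 0 := ne_of_gt hm
  set c : ℝ := (1 - m / L) ^ 2 with hcdef
  have hρ0 : (0:ℝ) ≤ 1 - m / L := by
    have : m / L ≤ 1 := (div_le_one hL).mpr hmL
    linarith
  have hρ1 : 1 - m / L < 1 := by
    have : 0 < m / L := div_pos hm hL
    linarith
  have hc0 : (0:ℝ) ≤ c := sq_nonneg _
  have hc1 : c < 1 := by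
    rw [hcdef]
    exact pow_lt_one₀ hρ0 hρ1 two_ne_zero
  have hc1' : (0:ℝ) < 1 - c := by linarith
  have h2Lm : (0:ℝ) < 2 * L - m := by linarith
  have κident : (n:ℝ) * (L / m) ^ 2 / (2 * (L / m) - 1) = (n:ℝ) / (1 - c) := by
    rw [hcdef]
    have h1 : 2 * (L / m) - 1 = (2 * L - m) / m := by field_simp
    have h2 : 1 - (1 - m / L) ^ 2 = m * (2 * L - m) / L ^ 2 := by field_simp; ring
    rw [h1, h2]
    have h3 : (2 * L - m) ≠ 0 := ne_of_gt h2Lm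
    field_simp
  constructor
  · -- upper bound
    intro f xstar hdf hsc hlip hstar Ω _ μ hμ x w hupd hxm hwm hxi hwi hwmean hwcov hind
    rw [κident]
    apply limsup_avg_le (fun k => ∫ ω, ‖x k ω - xstar‖ ^ 2 ∂μ) c n hc0 hc1
    · intro k
      exact integral_nonneg fun ω => by positivity
    · intro t
      set G : EuclideanSpace ℝ (Fin n) → EuclideanSpace ℝ (Fin n) :=
        fun v => v - (1 / L) • gradient f v - xstar with hGdef
      have hGc : Continuous G := by
        apply Continuous.sub _ continuous_const
        exact continuous_id.sub (show Continuous fun v => (1 / L) • gradient f v from hlip.continuous.const_smul (1 / L))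
      set U : Ω → EuclideanSpace ℝ (Fin n) := fun ω => G (x t ω) with hUdef
      have hUmeas : Measurable U := hGc.measurable.comp (hxm t)
      have hcon : ∀ ω, ‖U ω‖ ^ 2 ≤ c * ‖x t ω - xstar‖ ^ 2 := fun ω =>
        contraction_sq hm hmL hdf hsc hlip hstar (x t ω)
      have hUi : Integrable (fun ω => ‖U ω‖ ^ 2) μ := by
        refine Integrable.mono' ((hxi t).const_mul c) (hUmeas.norm.pow_const 2).aestronglyMeasurable ?_
        filter_upwards with ω
        rw [Real.norm_eq_abs, abs_of_nonneg (by positivity)]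
        exact hcon ω
      have hindU : IndepFun U (w t) μ := (hind t).comp hGc.measurable measurable_id
      have key := expand_sq U (w t) hUmeas (hwm t) hUi (hwi t) (hwmean t) (hwcov t) hindU
      have hUeq : ∀ ω, x (t + 1) ω - xstar = U ω + w t ω := by
        intro ω
        rw [hupd t ω, hUdef, hGdef]
        module
      calc (∫ ω, ‖x (t + 1) ω - xstar‖ ^ 2 ∂μ) = ∫ ω, ‖U ω + w t ω‖ ^ 2 ∂μ := by
            apply integral_congr_ae
            filter_upwards with ω
            rw [hUeq ω]
        _ = (∫ ω, ‖U ω‖ ^ 2 ∂μ) + n := key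
        _ ≤ c * (∫ ω, ‖x t ω - xstar‖ ^ 2 ∂μ) + n := by
            have h5 : (∫ ω, ‖U ω‖ ^ 2 ∂μ) ≤ ∫ ω, c * ‖x t ω - xstar‖ ^ 2 ∂μ :=
              integral_mono hUi ((hxi t).const_mul c) hcon
            rw [integral_const_mul] at h5
            linarith
  · -- quadratic attains
    intro Ω _ μ hμ x w hupd hxm hwm hxi hwi hwmean hwcov hind
    rw [κident]
    apply limsup_avg_eq (fun k => ∫ ω, ‖x k ω‖ ^ 2 ∂μ) c n hc0 hc1
    intro t
    set U : Ω → EuclideanSpace ℝ (Fin n) := fun ω => (1 - m / L) • x t ω with hUdef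
    have hUmeas : Measurable U := (measurable_const_smul (1 - m / L)).comp (hxm t)
    have hUsq : ∀ ω, ‖U ω‖ ^ 2 = c * ‖x t ω‖ ^ 2 := by
      intro ω
      rw [hUdef]
      simp only
      rw [norm_smul, Real.norm_eq_abs, mul_pow, sq_abs, hcdef]
    have hUi : Integrable (fun ω => ‖U ω‖ ^ 2) μ := by
      apply Integrable.congr ((hxi t).const_mul c)
      filter_upwards with ω
      exact (hUsq ω).symm
    have hindU : IndepFun U (w t) μ := (hind t).comp (measurable_const_smul (1 - m / L)) measurable_id
    have key := expand_sq U (w t) hUmeas (hwm t) hUi (hwi t) (hwmean t) (hwcov t) hindU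
    have hUeq : ∀ ω, x (t + 1) ω = U ω + w t ω := by
      intro ω
      rw [hupd t ω, hUdef]
      simp only
      congr 1
      rw [smul_smul, sub_smul, one_smul]
      congr 2
      field_simp
    calc (∫ ω, ‖x (t + 1) ω‖ ^ 2 ∂μ) = ∫ ω, ‖U ω + w t ω‖ ^ 2 ∂μ := by
          apply integral_congr_ae
          filter_upwards with ω
          rw [hUeq ω]
      _ = (∫ ω, ‖U ω‖ ^ 2 ∂μ) + n := key
      _ = c * (∫ ω, ‖x t ω‖ ^ 2 ∂μ) + n := by
          congr 1
          rw [← integral_const_mul]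
          exact integral_congr_ae (by filter_upwards with ω using hUsq ω)
end

section
/- For the heavy-ball method on a strongly convex quadratic with extreme Hessian eigenvalues m and L (κ = L/m), with any stabilizing α > 0 and 0 < β < 1 and noise magnitude σ, the variance amplification J and convergence rate ρ satisfy J/(1-ρ) ≥ σ²((κ+1)/8)². -/
private lemma key_tradeoff (b s t A : ℝ) (hb0 : 0 < b) (hb1 : b < 1) (hs : 0 < s) (hst : s ≤ t)
    (ht : t < 2*(1+b^2)) (hA0 : 0 < A) (hA : A ≤ 1 - b) (hAu : A*(1-b) ≤ s) :
    (t+s)^2*(1-b^2)*(2*(1+b^2)-s)*A ≤ 64*(1+b^2)*s := by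
  have hc : (0:ℝ) < 1 + b^2 := by positivity
  have hb1' : (0:ℝ) ≤ 1 - b := by linarith
  have h2cs : 0 < 2*(1+b^2) - s := by linarith
  have hP : (2*(1+b^2)+(1-b)^2)^2*(1+b) ≤ 32 := by
    nlinarith [mul_nonneg hb1' (by positivity : (0:ℝ) ≤ 9*b^4+6*b^3+16*b^2+26*b+23)]
  rcases le_or_gt s ((1-b)^2) with hcase | hcase
  · calc (t+s)^2*(1-b^2)*(2*(1+b^2)-s)*A
        = (t+s)^2*(2*(1+b^2)-s)*((1+b)*(A*(1-b))) := by ring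
      _ ≤ (2*(1+b^2)+(1-b)^2)^2*(2*(1+b^2))*((1+b)*s) := by
          have h1 : (t+s)^2 ≤ (2*(1+b^2)+(1-b)^2)^2 := by
            have := pow_le_pow_left₀ (by linarith : (0:ℝ) ≤ t+s)
              (by linarith : t+s ≤ 2*(1+b^2)+(1-b)^2) 2
            linarith
          have h3 : (1+b)*(A*(1-b)) ≤ (1+b)*s :=
            mul_le_mul_of_nonneg_left hAu (by linarith)
          nlinarith [mul_nonneg (sq_nonneg (t+s)) h2cs.le,
            mul_le_mul h1 (by linarith : 2*(1+b^2)-s ≤ 2*(1+b^2)) h2cs.le (by positivity),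
            mul_le_mul_of_nonneg_left h3 (by positivity : (0:ℝ) ≤ (2*(1+b^2)+(1-b)^2)^2*(2*(1+b^2))),
            mul_le_mul_of_nonneg_right
              (mul_le_mul h1 (by linarith : 2*(1+b^2)-s ≤ 2*(1+b^2)) h2cs.le (by positivity))
              (by positivity : (0:ℝ) ≤ (1+b)*(A*(1-b)))]
      _ ≤ 64*(1+b^2)*s := by
          nlinarith [hP, hs.le, mul_le_mul_of_nonneg_right hP (by positivity : (0:ℝ) ≤ 2*(1+b^2)*s)]
  · calc (t+s)^2*(1-b^2)*(2*(1+b^2)-s)*A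
        = (t+s)^2*(2*(1+b^2)-s)*(1+b)*((1-b)*A) := by ring
      _ ≤ (2*(1+b^2)+s)^2*(2*(1+b^2)-s)*(1+b)*((1-b)^2) := by
          have h1 : (t+s)^2 ≤ (2*(1+b^2)+s)^2 := by
            have := pow_le_pow_left₀ (by linarith : (0:ℝ) ≤ t+s)
              (by linarith : t+s ≤ 2*(1+b^2)+s) 2
            linarith
          have h3 : (1-b)*A ≤ (1-b)^2 := by nlinarith [mul_le_mul_of_nonneg_left hA hb1']
          nlinarith [mul_le_mul_of_nonneg_right
              (mul_le_mul_of_nonneg_right (mul_le_mul_of_nonneg_right h1 h2cs.le)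
                (by linarith : (0:ℝ) ≤ 1+b)) (by positivity : (0:ℝ) ≤ (1-b)*A),
            mul_le_mul_of_nonneg_left h3
              (by positivity : (0:ℝ) ≤ (2*(1+b^2)+s)^2*(2*(1+b^2)-s)*(1+b))]
      _ ≤ (2*(1+b^2)+(1-b)^2)^2*(2*(1+b^2)-(1-b)^2)*(1+b)*s := by
          nlinarith [mul_nonneg (mul_nonneg (by linarith : (0:ℝ) ≤ 1+b)
              (by linarith : (0:ℝ) ≤ s - (1-b)^2))
              (by positivity : (0:ℝ) ≤ 8*(1+b^2)^3 + 2*(1+b^2)*s*(1-b)^2 + s*(1-b)^2*(s+(1-b)^2))]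
      _ ≤ 64*(1+b^2)*s := by
          have hv : (0:ℝ) ≤ 2*(1+b^2)-(1-b)^2 := by nlinarith
          nlinarith [mul_le_mul_of_nonneg_right
            (mul_le_mul hP (by nlinarith [sq_nonneg (1-b)] : 2*(1+b^2)-(1-b)^2 ≤ 2*(1+b^2)) hv (by norm_num))
            hs.le]

set_option maxHeartbeats 1000000 in
/-- Fundamental trade-off for the heavy-ball method: with any stabilizing
`α > 0`, `0 < β < 1` and noise magnitude `σ`, if `ρ < 1` dominates the moduli
of the eigenvalues of the modal matrices at `λ = m` and `λ = L` (the roots of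
`z² + (αλ-1-β)z + β`), and `J` dominates the modal variance contributions
`Ĵ_hb(m)`, `Ĵ_hb(L)`, then `J/(1-ρ) ≥ σ²((κ+1)/8)²` with `κ = L/m`. -/
theorem stmt_15 (m L α β σ J ρ : ℝ) (hm : 0 < m) (hmL : m ≤ L)
    (hα : 0 < α) (hβ0 : 0 < β) (hβ1 : β < 1) (hρ : ρ < 1)
    (hrootm : ∀ z : ℂ, z ^ 2 + ((α * m - 1 - β : ℝ) : ℂ) * z + (β : ℂ) = 0 → ‖z‖ ≤ ρ)
    (hrootL : ∀ z : ℂ, z ^ 2 + ((α * L - 1 - β : ℝ) : ℂ) * z + (β : ℂ) = 0 → ‖z‖ ≤ ρ)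
    (hJm : σ ^ 2 * (1 + β) / (α * m * (1 - β) * (2 * (1 + β) - α * m)) ≤ J)
    (hJL : σ ^ 2 * (1 + β) / (α * L * (1 - β) * (2 * (1 + β) - α * L)) ≤ J) :
    σ ^ 2 * ((L / m + 1) / 8) ^ 2 ≤ J / (1 - ρ) := by
  set s : ℝ := α * m with hsdef
  set t : ℝ := α * L with htdef
  have hL : 0 < L := lt_of_lt_of_le hm hmL
  have hs : 0 < s := mul_pos hα hm
  have ht0 : 0 < t := mul_pos hα hL
  have hst : s ≤ t := mul_le_mul_of_nonneg_left hmL hα.le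
  obtain ⟨w, hw⟩ : ∃ w : ℂ, w ^ 2 = ((s - 1 - β : ℝ) : ℂ) ^ 2 - 4 * (β : ℂ) :=
    IsAlgClosed.exists_pow_nat_eq _ (by norm_num)
  set p : ℂ := ((s - 1 - β : ℝ) : ℂ) with hpdef
  set z₁ : ℂ := (-p + w) / 2 with hz1def
  set z₂ : ℂ := -p - z₁ with hz2def
  have hz1 : z₁ ^ 2 + p * z₁ + (β : ℂ) = 0 := by
    rw [hz1def]; linear_combination hw / 4
  have hz2 : z₂ ^ 2 + p * z₂ + (β : ℂ) = 0 := by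
    rw [hz2def]; linear_combination hz1
  have hprod : z₁ * z₂ = (β : ℂ) := by
    rw [hz2def]; linear_combination -hz1
  have hsum : z₁ + z₂ = -p := by rw [hz2def]; ring
  have hn1 : ‖z₁‖ ≤ ρ := hrootm z₁ hz1
  have hn2 : ‖z₂‖ ≤ ρ := hrootm z₂ hz2
  have hρ0 : 0 ≤ ρ := le_trans (norm_nonneg _) hn1
  have hxy : ‖z₁‖ * ‖z₂‖ = β := by
    rw [← norm_mul, hprod, Complex.norm_real, Real.norm_of_nonneg hβ0.le]
  set b : ℝ := Real.sqrt β with hbdef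
  have hb0 : 0 < b := Real.sqrt_pos.2 hβ0
  have hbsq : b ^ 2 = β := Real.sq_sqrt hβ0.le
  have hbρ : b ≤ ρ := by
    have h2 : β ≤ ρ ^ 2 := by
      calc β = ‖z₁‖ * ‖z₂‖ := hxy.symm
        _ ≤ ρ * ρ := mul_le_mul hn1 hn2 (norm_nonneg _) hρ0
        _ = ρ ^ 2 := by ring
    calc b ≤ Real.sqrt (ρ ^ 2) := Real.sqrt_le_sqrt h2
      _ = ρ := by rw [Real.sqrt_sq hρ0]
  have hb1 : b < 1 := lt_of_le_of_lt hbρ hρ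
  have hfac : (1 - z₁) * (1 - z₂) = ((s : ℝ) : ℂ) := by
    calc (1 - z₁) * (1 - z₂) = 1 - (z₁ + z₂) + z₁ * z₂ := by ring
      _ = 1 + p + (β : ℂ) := by rw [hsum, hprod]; ring
      _ = ((s : ℝ) : ℂ) := by rw [hpdef]; push_cast; ring
  have hnormfac : ‖1 - z₁‖ * ‖1 - z₂‖ = s := by
    rw [← norm_mul, hfac, Complex.norm_real, Real.norm_of_nonneg hs.le]
  have h1x : (1 : ℝ) - ‖z₁‖ ≤ ‖1 - z₁‖ := by
    calc (1:ℝ) - ‖z₁‖ = ‖(1:ℂ)‖ - ‖z₁‖ := by rw [norm_one]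
      _ ≤ ‖1 - z₁‖ := norm_sub_norm_le _ _
  have h1y : (1 : ℝ) - ‖z₂‖ ≤ ‖1 - z₂‖ := by
    calc (1:ℝ) - ‖z₂‖ = ‖(1:ℂ)‖ - ‖z₂‖ := by rw [norm_one]
      _ ≤ ‖1 - z₂‖ := norm_sub_norm_le _ _
  have hAu : (1 - ρ) * (1 - b) ≤ s := by
    have hx1 : (0:ℝ) < 1 - ‖z₁‖ := by linarith [lt_of_le_of_lt hn1 hρ]
    have hy1 : (0:ℝ) < 1 - ‖z₂‖ := by linarith [lt_of_le_of_lt hn2 hρ]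
    have hstep : (1 - ‖z₁‖) * (1 - ‖z₂‖) ≤ s := by
      rw [← hnormfac]
      exact mul_le_mul h1x h1y hy1.le (le_trans hx1.le h1x)
    have hlow : (1 - ρ) * (1 - b) ≤ (1 - ‖z₁‖) * (1 - ‖z₂‖) := by
      nlinarith [mul_nonneg (sub_nonneg.2 hn1) (sub_nonneg.2 hn2),
        mul_nonneg (mul_nonneg hb0.le (sub_nonneg.2 hbρ)) (by linarith : (0:ℝ) ≤ 1 - ρ),
        hxy, hbsq]
    linarith
  have htlt : t < 2 * (1 + β) := by
    by_contra hcon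
    push_neg at hcon
    set q : ℝ := α * L - 1 - β with hqdef
    have hq : q = t - 1 - β := by rw [hqdef, htdef]
    have hD : (1 - β)^2 ≤ q^2 - 4*β := by nlinarith [hq]
    have hD0 : 0 ≤ q^2 - 4*β := le_trans (sq_nonneg _) hD
    set r : ℝ := Real.sqrt (q^2 - 4*β) with hrdef
    have hr2 : r^2 = q^2 - 4*β := Real.sq_sqrt hD0
    have hrge : 1 - β ≤ r := by
      calc 1 - β = Real.sqrt ((1-β)^2) := by rw [Real.sqrt_sq (by linarith)]
        _ ≤ r := Real.sqrt_le_sqrt hD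
    set x₀ : ℝ := (-q - r) / 2 with hx0def
    have hx0root : x₀^2 + q*x₀ + β = 0 := by rw [hx0def]; linear_combination hr2 / 4
    have hx0le : x₀ ≤ -1 := by
      rw [hx0def]
      have hq1 : 1 + β ≤ q := by rw [hq]; linarith
      linarith
    have hcx : ((x₀ : ℝ) : ℂ) ^ 2 + ((q : ℝ) : ℂ) * ((x₀ : ℝ) : ℂ) + (β : ℂ) = 0 := by
      have h0 : ((x₀^2 + q*x₀ + β : ℝ) : ℂ) = 0 := by rw [hx0root]; norm_num
      push_cast at h0 ⊢
      linear_combination h0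
    have hnx := hrootL _ hcx
    rw [Complex.norm_real, Real.norm_eq_abs, abs_of_nonpos (by linarith)] at hnx
    linarith
  -- assemble
  have hA0 : (0:ℝ) < 1 - ρ := by linarith
  have hstar := key_tradeoff b s t (1-ρ) hb0 hb1 hs hst (by rw [hbsq]; exact htlt) hA0
    (by linarith) hAu
  rw [hbsq] at hstar
  -- hstar : (t+s)^2*(1-β)*(2*(1+β)-s)*(1-ρ) ≤ 64*(1+β)*s
  have hLm : L / m + 1 = (t + s) / s := by
    rw [htdef, hsdef]
    field_simp
  rw [hLm, le_div_iff₀ hA0]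
  refine le_trans ?_ hJm
  have hden : 0 < s * (1 - β) * (2 * (1 + β) - s) := by
    have h1 : (0:ℝ) < 1 - β := by linarith
    have h2 : (0:ℝ) < 2 * (1 + β) - s := by linarith
    positivity
  rw [le_div_iff₀ hden]
  have hσstar := mul_le_mul_of_nonneg_left hstar (sq_nonneg σ)
  have e : σ ^ 2 * ((t + s) / s / 8) ^ 2 * (1 - ρ) * (s * (1 - β) * (2 * (1 + β) - s))
      = σ ^ 2 * ((t+s)^2*(1-β)*(2*(1+β)-s)*(1-ρ)) / (64 * s) := by
    field_simp
    ring
  rw [e, div_le_iff₀ (by positivity : (0:ℝ) < 64 * s)]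
  nlinarith [hσstar]
end

section
/- For the heavy-ball modal dynamics with eigenvalue λ and parameters α, β, the spectral radius of Â = [[0,1],[-β, 1+β-αλ]] equals √β if (1-√β)² ≤ αλ ≤ (1+√β)², and equals (1/2)|1+β-αλ| + (1/2)√((1+β-αλ)²-4β) otherwise, when 0 ≤ β < 1 and (1+β-αλ)² ≥ 4β in the second case. -/
lemma quad_factor (b c : ℝ) (z₁ z₂ : ℂ) (h1 : z₁ + z₂ = -(b:ℂ))
    (h2 : z₁ * z₂ = (c:ℂ)) (z : ℂ) :
    z ^ 2 + (b:ℂ) * z + (c:ℂ) = 0 ↔ z = z₁ ∨ z = z₂ := by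
  have hb : (b:ℂ) = -(z₁ + z₂) := by rw [h1]; ring
  have h : z ^ 2 + (b:ℂ) * z + (c:ℂ) = (z - z₁) * (z - z₂) := by
    rw [hb, ← h2]; ring
  rw [h, mul_eq_zero, sub_eq_zero, sub_eq_zero]

/-- Spectral radius of the heavy-ball modal matrix `Â = [[0,1],[-β,1+β-αλ]]`
(whose eigenvalues are the roots of `z² + (αλ-1-β)z + β`): it equals `√β` when
`(1-√β)² ≤ αλ ≤ (1+√β)²`, and `(|1+β-αλ| + √((1+β-αλ)²-4β))/2` otherwise
(when `(1+β-αλ)² ≥ 4β`), for `0 ≤ β < 1`. -/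
theorem stmt_16 (α β lam : ℝ) (hβ0 : 0 ≤ β) (hβ1 : β < 1) :
    ((1 - Real.sqrt β) ^ 2 ≤ α * lam ∧ α * lam ≤ (1 + Real.sqrt β) ^ 2 →
      IsGreatest {r : ℝ | ∃ z : ℂ,
          z ^ 2 + ((α * lam - 1 - β : ℝ) : ℂ) * z + (β : ℂ) = 0 ∧ r = ‖z‖}
        (Real.sqrt β)) ∧
    (¬ ((1 - Real.sqrt β) ^ 2 ≤ α * lam ∧ α * lam ≤ (1 + Real.sqrt β) ^ 2) →
      4 * β ≤ (1 + β - α * lam) ^ 2 →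
      IsGreatest {r : ℝ | ∃ z : ℂ,
          z ^ 2 + ((α * lam - 1 - β : ℝ) : ℂ) * z + (β : ℂ) = 0 ∧ r = ‖z‖}
        ((|1 + β - α * lam| + Real.sqrt ((1 + β - α * lam) ^ 2 - 4 * β)) / 2)) := by
  set b : ℝ := α * lam - 1 - β with hbdef
  have hs2 : Real.sqrt β ^ 2 = β := Real.sq_sqrt hβ0
  constructor
  · rintro ⟨h1, h2⟩
    -- complex conjugate roots case
    have hble : b ^ 2 ≤ 4 * β := by nlinarith [Real.sqrt_nonneg β]
    set t : ℝ := Real.sqrt (4 * β - b ^ 2) with htdef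
    have ht0 : 0 ≤ t := Real.sqrt_nonneg _
    have ht2 : t ^ 2 = 4 * β - b ^ 2 := Real.sq_sqrt (by linarith)
    have ht2c : (t:ℂ) ^ 2 = 4 * (β:ℂ) - (b:ℂ) ^ 2 := by exact_mod_cast congrArg (Complex.ofReal ·) ht2
    set z₁ : ℂ := (-(b:ℂ) + (t:ℂ) * Complex.I) / 2 with hz1
    set z₂ : ℂ := (-(b:ℂ) - (t:ℂ) * Complex.I) / 2 with hz2
    have hsum : z₁ + z₂ = -(b:ℂ) := by rw [hz1, hz2]; ring
    have hprod : z₁ * z₂ = (β:ℂ) := by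
      rw [hz1, hz2]
      linear_combination (-(t:ℂ)^2/4) * Complex.I_sq + (1/4 : ℂ) * ht2c
    have hconj : (starRingEnd ℂ) z₁ = z₂ := by
      rw [hz1, hz2]
      simp [map_div₀, Complex.conj_ofReal, map_ofNat]
      ring
    have hn1 : Complex.normSq z₁ = β := by
      have := Complex.mul_conj z₁
      rw [hconj, hprod] at this
      exact_mod_cast this.symm
    have hnorm : ∀ z : ℂ, z = z₁ ∨ z = z₂ → ‖z‖ = Real.sqrt β := by
      rintro z (rfl | rfl)
      · rw [Complex.norm_def, hn1]
      · rw [← hconj, Complex.norm_conj, Complex.norm_def, hn1]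
    constructor
    · exact ⟨z₁, (quad_factor b β z₁ z₂ hsum hprod z₁).2 (Or.inl rfl),
        (hnorm z₁ (Or.inl rfl)).symm⟩
    · rintro r ⟨z, hz, rfl⟩
      rw [hnorm z ((quad_factor b β z₁ z₂ hsum hprod z).1 hz)]
  · rintro hni hdisc
    have hb2 : (1 + β - α * lam) ^ 2 = b ^ 2 := by rw [hbdef]; ring
    rw [hb2] at hdisc
    set t : ℝ := Real.sqrt ((1 + β - α * lam) ^ 2 - 4 * β) with htdef
    have ht0 : 0 ≤ t := Real.sqrt_nonneg _
    have ht2 : t ^ 2 = b ^ 2 - 4 * β := by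
      rw [htdef, Real.sq_sqrt (by rw [hb2]; linarith)]; rw [hb2]
    have habs : |1 + β - α * lam| = |b| := by
      rw [show (1 + β - α * lam) = -b by rw [hbdef]; ring, abs_neg]
    set r₁ : ℝ := (-b + t) / 2 with hr1
    set r₂ : ℝ := (-b - t) / 2 with hr2
    have hsum : (↑r₁ : ℂ) + ↑r₂ = -(b:ℂ) := by rw [hr1, hr2]; push_cast; ring
    have hrr : r₁ * r₂ = β := by rw [hr1, hr2]; linear_combination (-1/4 : ℝ) * ht2
    have hprod : (↑r₁ : ℂ) * ↑r₂ = (β:ℂ) := by rw [← hrr]; push_cast; ring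
    have key : ∀ z : ℂ, z = (r₁:ℂ) ∨ z = (r₂:ℂ) → ‖z‖ ≤ (|b| + t) / 2 := by
      rintro z (rfl | rfl) <;>
        · rw [Complex.norm_real, Real.norm_eq_abs, abs_le]
          constructor <;> linarith [neg_abs_le b, le_abs_self b]
    constructor
    · rw [habs]
      rcases le_or_gt b 0 with hb | hb
      · refine ⟨(r₁:ℂ), (quad_factor b β _ _ hsum hprod _).2 (Or.inl rfl), ?_⟩
        rw [Complex.norm_real, Real.norm_eq_abs,
          abs_of_nonneg (show (0:ℝ) ≤ r₁ by rw [hr1]; linarith),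
          abs_of_nonpos hb, hr1]
      · refine ⟨(r₂:ℂ), (quad_factor b β _ _ hsum hprod _).2 (Or.inr rfl), ?_⟩
        rw [Complex.norm_real, Real.norm_eq_abs,
          abs_of_nonpos (show r₂ ≤ 0 by rw [hr2]; linarith),
          abs_of_pos hb, hr2]
        ring
    · rintro r ⟨z, hz, rfl⟩
      rw [habs]
      exact key z ((quad_factor b β _ _ hsum hprod z).1 hz)
end

section
/- For Nesterov's method on a quadratic with Hessian eigenvalues in [m, κm], with parameters α > 0 and 0 < β < 1, the algorithm is stable (spectral radius of every modal matrix strictly less than 1) if and only if m < (2β+2)/(ακ(2β+1)), i.e., αL < (2β+2)/(2β+1), where L = κm is the largest eigenvalue. -/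
lemma stmt_17_aux (β u x y : ℝ) (hβ0 : 0 < β) (hβ1 : β < 1) (hu1 : u < 1)
    (hu2 : -1 < (2 * β + 1) * u)
    (hre : x ^ 2 - y ^ 2 - (1 + β) * u * x + β * u = 0)
    (him : y * (2 * x - (1 + β) * u) = 0) : x ^ 2 + y ^ 2 < 1 := by
  set c : ℝ := (1 + β) * u with hc
  set d : ℝ := β * u with hd
  have hc2 : c < 2 := by
    rw [hc]; nlinarith [mul_pos (by linarith : (0:ℝ) < 1 - u) (by linarith : (0:ℝ) < 1 + β)]
  have hcm2 : -2 < c := by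
    rcases le_or_gt 0 u with hu0 | hu0
    · rw [hc]; nlinarith
    · rw [hc]; nlinarith [mul_pos (by linarith : (0:ℝ) < -u) hβ0]
  have hp1 : 0 < 1 - c + d := by rw [hc, hd]; nlinarith
  have hpm1 : 0 < 1 + c + d := by rw [hc, hd]; nlinarith
  rcases mul_eq_zero.1 him with hy | hxc
  · rw [hy] at hre ⊢
    have hceq : x ^ 2 - c * x + d = 0 := by linear_combination hre
    have hx1 : x < 1 := by
      by_contra hx1; push_neg at hx1
      nlinarith [mul_nonneg (by linarith : (0:ℝ) ≤ x - 1) (by linarith : (0:ℝ) ≤ x + 1 - c)]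
    have hx2 : -1 < x := by
      by_contra hx2; push_neg at hx2
      nlinarith [mul_nonneg (by linarith : (0:ℝ) ≤ -(x+1)) (by linarith : (0:ℝ) ≤ -(x - 1 - c))]
    nlinarith
  · have hx : x = c / 2 := by linarith
    have hy2 : y ^ 2 = d - c ^ 2 / 4 := by rw [hx] at hre; linear_combination -hre
    have hsum : x ^ 2 + y ^ 2 = d := by rw [hx, hy2]; ring
    rw [hsum]
    rcases le_or_gt u 0 with hu0 | hu0
    · rw [hd]; nlinarith
    · rw [hd]; nlinarith



/-- Stability of Nesterov's method on a quadratic with Hessian spectrum in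
`[m, κm]`: with `α > 0` and `0 < β < 1`, every modal matrix
`Â(λ) = [[0,1],[-β(1-αλ),(1+β)(1-αλ)]]` (whose eigenvalues are the roots of
`z² - (1+β)(1-αλ)z + β(1-αλ)`) has spectral radius `< 1` for all `λ ∈ [m, κm]`
if and only if `m < (2β+2)/(ακ(2β+1))`. -/
theorem stmt_17 (α β m κ : ℝ) (hα : 0 < α) (hβ0 : 0 < β) (hβ1 : β < 1)
    (hm : 0 < m) (hκ : 1 ≤ κ) :
    (∀ lam ∈ Set.Icc m (κ * m), ∀ z : ℂ,
        z ^ 2 - (((1 + β) * (1 - α * lam) : ℝ) : ℂ) * z + ((β * (1 - α * lam) : ℝ) : ℂ) = 0 →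
        ‖z‖ < 1) ↔
      m < (2 * β + 2) / (α * κ * (2 * β + 1)) := by
  have hden : 0 < α * κ * (2 * β + 1) := by positivity
  constructor
  · -- forward: contrapositive
    intro H
    by_contra hlt
    push_neg at hlt
    -- hlt : (2β+2)/(ακ(2β+1)) ≤ m
    have hκm : (2 * β + 2) ≤ α * κ * (2 * β + 1) * m := by
      rw [div_le_iff₀ hden] at hlt; linarith
    set u : ℝ := 1 - α * (κ * m) with hu
    have hu1 : (2 * β + 1) * u ≤ -1 := by
      have : α * (κ * m) * (2 * β + 1) ≥ 2 * β + 2 := by nlinarith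
      nlinarith
    set c : ℝ := (1 + β) * u with hc
    set d : ℝ := β * u with hd
    have hune : u < 0 := by nlinarith
    have hcne : c ≤ 0 := by nlinarith
    have hdne : d ≤ 0 := by nlinarith
    -- p(-1) = 1 + c + d ≤ 0
    have hpneg : 1 + c + d ≤ 0 := by
      have : c + d = (2 * β + 1) * u := by ring
      linarith
    set a : ℝ := -(1 - c - d) with ha
    have hab : a ≤ -1 := by nlinarith
    set p : ℝ → ℝ := fun x => x ^ 2 - c * x + d with hp
    have hpa : 0 ≤ p a := by
      simp only [hp, ha]
      nlinarith [sq_nonneg (c + d), sq_nonneg c, sq_nonneg d, mul_nonneg (neg_nonneg.2 hcne) (neg_nonneg.2 hdne)]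
    have hcont : ContinuousOn p (Set.Icc a (-1)) := by
      fun_prop
    have hmem : (0 : ℝ) ∈ Set.Icc (p (-1)) (p a) := by
      constructor
      · simp only [hp]; nlinarith
      · exact hpa
    obtain ⟨x, hx, hpx⟩ := intermediate_value_Icc' hab hcont hmem
    have hx1 : x ≤ -1 := hx.2
    have hroot : ((x : ℂ)) ^ 2 - (((1 + β) * (1 - α * (κ * m)) : ℝ) : ℂ) * (x : ℂ)
        + ((β * (1 - α * (κ * m)) : ℝ) : ℂ) = 0 := by
      have : x ^ 2 - c * x + d = 0 := hpx
      push_cast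
      rw [show ((1:ℂ) + β) * (1 - α * (κ * m)) = (c : ℂ) by push_cast [hc, hu]; ring,
        show ((β:ℂ)) * (1 - α * (κ * m)) = (d : ℂ) by push_cast [hd, hu]; ring]
      exact_mod_cast this
    have hmem2 : κ * m ∈ Set.Icc m (κ * m) := by
      constructor
      · nlinarith
      · exact le_refl _
    have hlt1 := H (κ * m) hmem2 (x : ℂ) hroot
    rw [Complex.norm_real, Real.norm_eq_abs] at hlt1
    have habs : 1 ≤ |x| := by rw [abs_of_nonpos (by linarith)]; linarith
    linarith
  · -- backward
    intro h lam hlam z hz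
    obtain ⟨hl1, hl2⟩ := hlam
    have hlam0 : 0 < lam := lt_of_lt_of_le hm hl1
    set u : ℝ := 1 - α * lam with hu
    have hu1 : u < 1 := by nlinarith
    have hu2 : -1 < (2 * β + 1) * u := by
      have h1 : m * (α * κ * (2 * β + 1)) < 2 * β + 2 := by
        rw [lt_div_iff₀ hden] at h; linarith
      have h2 : α * lam * (2 * β + 1) < 2 * β + 2 := by nlinarith
      nlinarith
    have hre : z.re ^ 2 - z.im ^ 2 - (1 + β) * u * z.re + β * u = 0 := by
      have h1 := congrArg Complex.re hz
      simp [pow_two, Complex.mul_re, Complex.mul_im] at h1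
      rw [hu]; linear_combination h1
    have him : z.im * (2 * z.re - (1 + β) * u) = 0 := by
      have h2 := congrArg Complex.im hz
      simp [pow_two, Complex.mul_re, Complex.mul_im] at h2
      rw [hu]; linear_combination h2
    have hgoal := stmt_17_aux β u z.re z.im hβ0 hβ1 hu1 hu2 hre him
    have hnorm : ‖z‖ ^ 2 = z.re ^ 2 + z.im ^ 2 := by
      rw [Complex.sq_norm, Complex.normSq_apply]; ring
    nlinarith [norm_nonneg z]
end

section
/- For Nesterov's accelerated method with any stabilizing parameters α > 0, 0 < β < 1 applied to a strongly convex quadratic with condition number κ > 2, smallest Hessian eigenvalue m, and σ = 1, the modal variance amplification at m satisfies Ĵ_na(m) ≥ κ²/(24(1-β)κ + 32β). -/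
set_option maxHeartbeats 800000


/-- Lower bound on the modal variance amplification of Nesterov's method at
the smallest Hessian eigenvalue `m` (with `σ = 1`): for any stabilizing
`α > 0`, `0 < β < 1` and condition number `κ > 2`,
`Ĵ_na(m) ≥ κ²/(24(1-β)κ + 32β)`. -/
theorem stmt_18 (α β m κ : ℝ) (hα : 0 < α) (hβ0 : 0 < β) (hβ1 : β < 1)
    (hm : 0 < m) (hκ : 2 < κ)
    (hstab : m < (2 * β + 2) / (α * κ * (2 * β + 1))) :
    κ ^ 2 / (24 * (1 - β) * κ + 32 * β) ≤
      (1 + β * (1 - α * m)) /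
        (α * m * (1 - β * (1 - α * m)) * (2 * (1 + β) - (2 * β + 1) * (α * m))) := by
  set t := α * m with htdef
  have ht0 : 0 < t := mul_pos hα hm
  have hden : 0 < α * κ * (2 * β + 1) := by positivity
  have ht : κ * (2 * β + 1) * t < 2 * β + 2 := by
    have := (lt_div_iff₀ hden).mp hstab
    nlinarith [this]
  have ht1 : t < 1 := by
    nlinarith [mul_nonneg (show (0:ℝ) ≤ κ*(2*β+1)-(4*β+2) by nlinarith) ht0.le]
  have h1 : 0 < 1 - β * (1 - t) := by nlinarith
  have h2 : 0 < 2 * (1 + β) - (2 * β + 1) * t := by nlinarith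
  have hA : 0 < 24 * (1 - β) * κ + 32 * β := by nlinarith
  have hD : 0 < t * (1 - β * (1 - t)) * (2 * (1 + β) - (2 * β + 1) * t) := by positivity
  rw [div_le_div_iff₀ hA hD]
  have hN : (1:ℝ) ≤ 1 + β * (1 - t) := by nlinarith
  have hc : 0 < 2 * β + 2 - κ * (2 * β + 1) * t := by linarith
  have hκ0 : (0:ℝ) ≤ κ := by linarith
  have h1β : (0:ℝ) ≤ 1 - β := by linarith
  have e1 : κ * (1 - β) * (κ * (2 * β + 1) * t) ≤ κ * (1 - β) * (2 * β + 2) := by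
    nlinarith [mul_nonneg (mul_nonneg hκ0 h1β) hc.le]
  have e2 : (κ * (2 * β + 1) * t) ^ 2 ≤ (2 * β + 2) ^ 2 := by
    nlinarith [mul_nonneg hc.le (show (0:ℝ) ≤ 2 * β + 2 + κ * (2 * β + 1) * t by positivity)]
  have e1' : 2 * (1 + β) * (2 * β + 1) * (κ * (1 - β) * (κ * (2 * β + 1) * t)) ≤
      2 * (1 + β) * (2 * β + 1) * (κ * (1 - β) * (2 * β + 2)) :=
    mul_le_mul_of_nonneg_left e1 (by positivity)
  have e2' : 2 * (1 + β) * β * (κ * (2 * β + 1) * t) ^ 2 ≤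
      2 * (1 + β) * β * (2 * β + 2) ^ 2 :=
    mul_le_mul_of_nonneg_left e2 (by positivity)
  have hC1 : 2 * (1 + β) * (2 * β + 1) * (κ * (1 - β) * (2 * β + 2)) ≤
      24 * (1 - β) * κ * (2 * β + 1) ^ 2 := by
    nlinarith [mul_nonneg (mul_nonneg hκ0 h1β) (sq_nonneg (1 - β)),
      mul_nonneg hκ0 h1β, mul_nonneg (mul_nonneg hκ0 h1β) hβ0.le,
      mul_nonneg (mul_nonneg (mul_nonneg hκ0 h1β) hβ0.le) hβ0.le]
  have hC2 : 2 * (1 + β) * β * (2 * β + 2) ^ 2 ≤ 32 * β * (2 * β + 1) ^ 2 := by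
    nlinarith [mul_nonneg hβ0.le hβ0.le, mul_nonneg (mul_nonneg hβ0.le hβ0.le) hβ0.le,
      mul_nonneg (mul_nonneg (mul_nonneg hβ0.le hβ0.le) hβ0.le) hβ0.le]
  have hdropS : κ ^ 2 * (t * (1 - β * (1 - t)) * (2 * (1 + β) - (2 * β + 1) * t)) * (2 * β + 1) ^ 2 ≤
      (2 * (1 + β) * (2 * β + 1) * (κ * (1 - β) * (κ * (2 * β + 1) * t)) +
        2 * (1 + β) * β * (κ * (2 * β + 1) * t) ^ 2) := by
    have h := mul_nonneg (mul_nonneg (mul_nonneg (sq_nonneg κ) ht0.le) h1.le)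
      (mul_nonneg (pow_nonneg (by positivity : (0:ℝ) ≤ 2 * β + 1) 3) ht0.le)
    linarith [h]
  have keyS : κ ^ 2 * (t * (1 - β * (1 - t)) * (2 * (1 + β) - (2 * β + 1) * t)) * (2 * β + 1) ^ 2 ≤
      (24 * (1 - β) * κ + 32 * β) * (2 * β + 1) ^ 2 := by
    linarith [hdropS, e1', e2', hC1, hC2]
  have key : κ ^ 2 * (t * (1 - β * (1 - t)) * (2 * (1 + β) - (2 * β + 1) * t)) ≤
      24 * (1 - β) * κ + 32 * β :=
    le_of_mul_le_mul_right keyS (by positivity)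
  calc κ ^ 2 * (t * (1 - β * (1 - t)) * (2 * (1 + β) - (2 * β + 1) * t))
      ≤ 24 * (1 - β) * κ + 32 * β := key
    _ ≤ (1 + β * (1 - t)) * (24 * (1 - β) * κ + 32 * β) := le_mul_of_one_le_left hA.le hN
end
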